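/- arXiv:1104.1774 — 5 statements merged into one kernel-verified Lean document; each statement's English description precedes it below -/
import Mathlib

section
/- For the normalized Lennard-Jones type setting, if φ''_{2F} ≤ 0 then the quadratic form of the linearized atomistic operator satisfies ⟨L^a u, u⟩ = A_F ‖u'‖²_{ℓ²_ε} − ε² φ''_{2F} ‖u''‖²_{ℓ²_ε} for all admissible displacements u, where A_F = φ''_F + 4 φ''_{2F}. -/
lemma shift_sum_aux (M : ℤ) (f : ℤ → ℝ) (hf : ∀ j : ℤ, (M ≤ j ∨ j ≤ -M) → f j = 0) :
    ∑ j ∈ Finset.Icc (-M) M, f (j + 1) = ∑ j ∈ Finset.Icc (-M) M, f j := by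
  have h1 : ∑ j ∈ Finset.Icc (-M) M, f (j + 1)
      = ∑ j ∈ Finset.Icc (-M + 1) (M + 1), f j := by
    rw [← Finset.map_add_right_Icc _ _ (1 : ℤ), Finset.sum_map]
    rfl
  have h2 : ∑ j ∈ Finset.Icc (-M + 1) (M - 1), f j
      = ∑ j ∈ Finset.Icc (-M + 1) (M + 1), f j :=
    Finset.sum_subset (Finset.Icc_subset_Icc le_rfl (by omega))
      (by
        intro x hx hx'
        simp only [Finset.mem_Icc] at hx hx'
        exact hf x (by omega))
  have h3 : ∑ j ∈ Finset.Icc (-M + 1) (M - 1), f j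
      = ∑ j ∈ Finset.Icc (-M) M, f j :=
    Finset.sum_subset (Finset.Icc_subset_Icc (by omega) (by omega))
      (by
        intro x hx hx'
        simp only [Finset.mem_Icc] at hx hx'
        exact hf x (by omega))
  rw [h1, ← h2, h3]

/-- quadratic form identity for the linearized atomistic operator. -/
theorem atomistic_quadratic_form_identity
    (N : ℕ) (hN : 2 ≤ N) (ε φF φ2F : ℝ) (hε : ε = 1 / N) (hφ : φ2F ≤ 0)
    (u : ℤ → ℝ) (hu : ∀ j : ℤ, (N : ℤ) ≤ |j| → u j = 0) :
    ε * ∑ j ∈ Finset.Icc (-(N : ℤ) + 1) ((N : ℤ) - 1),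
        (φF * ((-u (j + 1) + 2 * u j - u (j - 1)) / ε ^ 2)
          + φ2F * ((-u (j + 2) + 2 * u j - u (j - 2)) / ε ^ 2)) * u j
      = (φF + 4 * φ2F) *
          (ε * ∑ ℓ ∈ Finset.Icc (-(N : ℤ) + 1) (N : ℤ), ((u ℓ - u (ℓ - 1)) / ε) ^ 2)
        - φ2F * ε ^ 3 * ∑ ℓ ∈ Finset.Icc (-(N : ℤ)) (N : ℤ),
            ((u (ℓ + 1) - 2 * u ℓ + u (ℓ - 1)) / ε ^ 2) ^ 2 := by
  have hN2 : (2 : ℤ) ≤ (N : ℤ) := by exact_mod_cast hN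
  have hNpos : (0 : ℝ) < (N : ℝ) := by
    have : 0 < N := by omega
    exact_mod_cast this
  have hε0 : ε ≠ 0 := by rw [hε]; positivity
  have hu' : ∀ j : ℤ, ((N : ℤ) ≤ j ∨ j ≤ -(N : ℤ)) → u j = 0 := fun j h =>
    hu j (le_abs.mpr (by omega))
  set M : ℤ := (N : ℤ) + 2 with hMdef
  -- extend all three sums to Icc (-M) M
  have eL : (∑ j ∈ Finset.Icc (-(N : ℤ) + 1) ((N : ℤ) - 1),
        (φF * ((-u (j + 1) + 2 * u j - u (j - 1)) / ε ^ 2)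
          + φ2F * ((-u (j + 2) + 2 * u j - u (j - 2)) / ε ^ 2)) * u j)
      = ∑ j ∈ Finset.Icc (-M) M,
        (φF * ((-u (j + 1) + 2 * u j - u (j - 1)) / ε ^ 2)
          + φ2F * ((-u (j + 2) + 2 * u j - u (j - 2)) / ε ^ 2)) * u j :=
    Finset.sum_subset (Finset.Icc_subset_Icc (by omega) (by omega))
      (by
        intro x hx hx'
        simp only [Finset.mem_Icc] at hx hx'
        rw [hu' x (by omega), mul_zero])
  have eT1 : (∑ ℓ ∈ Finset.Icc (-(N : ℤ) + 1) (N : ℤ), ((u ℓ - u (ℓ - 1)) / ε) ^ 2)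
      = ∑ ℓ ∈ Finset.Icc (-M) M, ((u ℓ - u (ℓ - 1)) / ε) ^ 2 :=
    Finset.sum_subset (Finset.Icc_subset_Icc (by omega) (by omega))
      (by
        intro x hx hx'
        simp only [Finset.mem_Icc] at hx hx'
        rw [hu' x (by omega), hu' (x - 1) (by omega)]
        simp)
  have eT2 : (∑ ℓ ∈ Finset.Icc (-(N : ℤ)) (N : ℤ),
        ((u (ℓ + 1) - 2 * u ℓ + u (ℓ - 1)) / ε ^ 2) ^ 2)
      = ∑ ℓ ∈ Finset.Icc (-M) M, ((u (ℓ + 1) - 2 * u ℓ + u (ℓ - 1)) / ε ^ 2) ^ 2 :=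
    Finset.sum_subset (Finset.Icc_subset_Icc (by omega) (by omega))
      (by
        intro x hx hx'
        simp only [Finset.mem_Icc] at hx hx'
        rw [hu' (x + 1) (by omega), hu' x (by omega), hu' (x - 1) (by omega)]
        simp)
  rw [eL, eT1, eT2]
  -- shift identities
  have hB : ∑ j ∈ Finset.Icc (-M) M, u (j + 1) * u j
      = ∑ j ∈ Finset.Icc (-M) M, u j * u (j - 1) := by
    have h := shift_sum_aux M (fun j => u j * u (j - 1))
      (fun j hj => by simp [hu' j (by omega)])
    rw [← h]
    exact Finset.sum_congr rfl fun j _ => by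
      show u (j + 1) * u j = u (j + 1) * u (j + 1 - 1)
      rw [show j + 1 - 1 = j from by ring]
  have hC : ∑ j ∈ Finset.Icc (-M) M, u (j + 2) * u j
      = ∑ j ∈ Finset.Icc (-M) M, u (j + 1) * u (j - 1) := by
    have h := shift_sum_aux M (fun j => u (j + 1) * u (j - 1))
      (fun j hj => by simp [hu' (j + 1) (by omega)])
    rw [← h]
    exact Finset.sum_congr rfl fun j _ => by
      show u (j + 2) * u j = u (j + 1 + 1) * u (j + 1 - 1)
      rw [show j + 1 + 1 = j + 2 from by ring, show j + 1 - 1 = j from by ring]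
  have hD : ∑ j ∈ Finset.Icc (-M) M, u (j + 1) * u (j - 1)
      = ∑ j ∈ Finset.Icc (-M) M, u j * u (j - 2) := by
    have h := shift_sum_aux M (fun j => u j * u (j - 2))
      (fun j hj => by simp [hu' j (by omega)])
    rw [← h]
    exact Finset.sum_congr rfl fun j _ => by
      show u (j + 1) * u (j - 1) = u (j + 1) * u (j + 1 - 2)
      rw [show j + 1 - 2 = j - 1 from by ring]
  have hGp : ∑ j ∈ Finset.Icc (-M) M, u (j + 1) * u (j + 1)
      = ∑ j ∈ Finset.Icc (-M) M, u j * u j := by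
    exact shift_sum_aux M (fun j => u j * u j)
      (fun j hj => by simp [hu' j (by omega)])
  have hGm : ∑ j ∈ Finset.Icc (-M) M, u j * u j
      = ∑ j ∈ Finset.Icc (-M) M, u (j - 1) * u (j - 1) := by
    have h := shift_sum_aux M (fun j => u (j - 1) * u (j - 1))
      (fun j hj => by simp [hu' (j - 1) (by omega)])
    rw [← h]
    exact Finset.sum_congr rfl fun j _ => by
      show u j * u j = u (j + 1 - 1) * u (j + 1 - 1)
      rw [show j + 1 - 1 = j from by ring]
  -- expand the three sums into linear combinations of monomial sums
  have exL : ∑ j ∈ Finset.Icc (-M) M,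
        (φF * ((-u (j + 1) + 2 * u j - u (j - 1)) / ε ^ 2)
          + φ2F * ((-u (j + 2) + 2 * u j - u (j - 2)) / ε ^ 2)) * u j
      = (φF / ε ^ 2 * 2 + φ2F / ε ^ 2 * 2) * ∑ j ∈ Finset.Icc (-M) M, u j * u j
        - (φF / ε ^ 2) * ∑ j ∈ Finset.Icc (-M) M, u (j + 1) * u j
        - (φF / ε ^ 2) * ∑ j ∈ Finset.Icc (-M) M, u j * u (j - 1)
        - (φ2F / ε ^ 2) * ∑ j ∈ Finset.Icc (-M) M, u (j + 2) * u j
        - (φ2F / ε ^ 2) * ∑ j ∈ Finset.Icc (-M) M, u j * u (j - 2) := by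
    rw [Finset.sum_congr rfl (fun j _ => show _ =
        (φF / ε ^ 2 * 2 + φ2F / ε ^ 2 * 2) * (u j * u j)
        - (φF / ε ^ 2) * (u (j + 1) * u j)
        - (φF / ε ^ 2) * (u j * u (j - 1))
        - (φ2F / ε ^ 2) * (u (j + 2) * u j)
        - (φ2F / ε ^ 2) * (u j * u (j - 2)) by ring)]
    simp only [Finset.sum_sub_distrib, ← Finset.mul_sum]
  have exT1 : ∑ ℓ ∈ Finset.Icc (-M) M, ((u ℓ - u (ℓ - 1)) / ε) ^ 2
      = (1 / ε ^ 2) * ∑ j ∈ Finset.Icc (-M) M, u j * u j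
        + (1 / ε ^ 2) * ∑ j ∈ Finset.Icc (-M) M, u (j - 1) * u (j - 1)
        - (2 / ε ^ 2) * ∑ j ∈ Finset.Icc (-M) M, u j * u (j - 1) := by
    rw [Finset.sum_congr rfl (fun j _ => show _ =
        (1 / ε ^ 2) * (u j * u j) + (1 / ε ^ 2) * (u (j - 1) * u (j - 1))
        - (2 / ε ^ 2) * (u j * u (j - 1)) by field_simp; ring)]
    simp only [Finset.sum_sub_distrib, Finset.sum_add_distrib, ← Finset.mul_sum]
  have exT2 : ∑ ℓ ∈ Finset.Icc (-M) M, ((u (ℓ + 1) - 2 * u ℓ + u (ℓ - 1)) / ε ^ 2) ^ 2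
      = (1 / ε ^ 4) * ∑ j ∈ Finset.Icc (-M) M, u (j + 1) * u (j + 1)
        + (4 / ε ^ 4) * ∑ j ∈ Finset.Icc (-M) M, u j * u j
        + (1 / ε ^ 4) * ∑ j ∈ Finset.Icc (-M) M, u (j - 1) * u (j - 1)
        + (2 / ε ^ 4) * ∑ j ∈ Finset.Icc (-M) M, u (j + 1) * u (j - 1)
        - (4 / ε ^ 4) * ∑ j ∈ Finset.Icc (-M) M, u (j + 1) * u j
        - (4 / ε ^ 4) * ∑ j ∈ Finset.Icc (-M) M, u j * u (j - 1) := by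
    rw [Finset.sum_congr rfl (fun j _ => show _ =
        (1 / ε ^ 4) * (u (j + 1) * u (j + 1)) + (4 / ε ^ 4) * (u j * u j)
        + (1 / ε ^ 4) * (u (j - 1) * u (j - 1))
        + (2 / ε ^ 4) * (u (j + 1) * u (j - 1))
        - (4 / ε ^ 4) * (u (j + 1) * u j)
        - (4 / ε ^ 4) * (u j * u (j - 1)) by field_simp; ring)]
    simp only [Finset.sum_sub_distrib, Finset.sum_add_distrib, ← Finset.mul_sum]
  rw [exL, exT1, exT2, hB, hC, hD, hGp, hGm]
  field_simp
  ring
end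

section
/- If φ''_{2F} ≤ 0, then the infimum of ⟨L^a u, u⟩ over admissible displacements u with ‖u'‖_{ℓ²_ε} = 1 equals A_F − ε² ν_ε φ''_{2F}, where ν_ε = min over nonzero admissible u of ‖u''‖²_{ℓ²_ε}/‖u'‖²_{ℓ²_ε}, and 0 < ν_ε ≤ C for a universal constant C independent of N. -/
set_option maxHeartbeats 1000000

open Finset

private lemma telescope' (F : ℤ → ℝ) (a : ℤ) : ∀ b : ℤ, a ≤ b →
    ∑ j ∈ Finset.Icc a b, (F j - F (j-1)) = F b - F (a-1) := by
  refine Int.le_induction ?_ ?_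
  · simp
  · intro n hn ih
    rw [show Finset.Icc a (n+1) = insert (n+1) (Finset.Icc a n) from
      Finset.ext fun x => by simp only [Finset.mem_Icc, Finset.mem_insert]; omega]
    rw [Finset.sum_insert (by simp), ih]
    ring_nf

private lemma sum_ext' (f : ℤ → ℝ) (a b a' b' : ℤ)
    (hf : ∀ j, j ∉ Finset.Icc a b → f j = 0)
    (hf' : ∀ j, j ∉ Finset.Icc a' b' → f j = 0) :
    ∑ j ∈ Finset.Icc a b, f j = ∑ j ∈ Finset.Icc a' b', f j := by
  have h1 : ∑ j ∈ Finset.Icc a b, f j = ∑ j ∈ Finset.Icc (min a a') (max b b'), f j :=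
    Finset.sum_subset (Finset.Icc_subset_Icc (min_le_left _ _) (le_max_left _ _))
      (fun j _ hj => hf j hj)
  have h2 : ∑ j ∈ Finset.Icc a' b', f j = ∑ j ∈ Finset.Icc (min a a') (max b b'), f j :=
    Finset.sum_subset (Finset.Icc_subset_Icc (min_le_right _ _) (le_max_right _ _))
      (fun j _ hj => hf' j hj)
  rw [h1, h2]

private lemma identI' (n : ℤ) (hn : 1 ≤ n) (u : ℤ → ℝ)
    (hu : ∀ j, j ≤ -n ∨ n ≤ j → u j = 0) :
    ∑ j ∈ Finset.Icc (-n+1) (n-1), (-u (j+1) + 2*u j - u (j-1)) * u j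
      = ∑ ℓ ∈ Finset.Icc (-n+1) n, (u ℓ - u (ℓ-1))^2 := by
  have e1 : ∑ j ∈ Finset.Icc (-n+1) (n-1), (-u (j+1) + 2*u j - u (j-1)) * u j
      = ∑ j ∈ Finset.Icc (-n) n, (-u (j+1) + 2*u j - u (j-1)) * u j := by
    refine sum_ext' _ _ _ _ _ ?_ ?_ <;>
      · intro j hj
        simp only [Finset.mem_Icc, not_and_or, not_le] at hj
        rw [hu j (by omega), mul_zero]
  have e2 : ∑ ℓ ∈ Finset.Icc (-n+1) n, (u ℓ - u (ℓ-1))^2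
      = ∑ ℓ ∈ Finset.Icc (-n) n, (u ℓ - u (ℓ-1))^2 := by
    refine sum_ext' _ _ _ _ _ ?_ ?_ <;>
      · intro j hj
        simp only [Finset.mem_Icc, not_and_or, not_le] at hj
        rw [hu j (by omega), hu (j-1) (by omega)]
        ring
  rw [e1, e2, ← sub_eq_zero, ← Finset.sum_sub_distrib]
  have h := telescope' (fun j => u j ^ 2 - u (j+1) * u j) (-n) n (by omega)
  rw [Finset.sum_congr rfl (fun j _ => by ring_nf :
    ∀ j ∈ Finset.Icc (-n) n, (-u (j+1) + 2*u j - u (j-1)) * u j - (u j - u (j-1))^2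
      = (u j ^ 2 - u (j+1) * u j) - (u (j-1) ^ 2 - u (j-1+1) * u (j-1))), h]
  rw [hu n (Or.inr le_rfl), hu (n+1) (by omega), hu (-n-1) (by omega), hu (-n-1+1) (by omega)]
  ring

private lemma identII' (n : ℤ) (hn : 1 ≤ n) (u : ℤ → ℝ)
    (hu : ∀ j, j ≤ -n ∨ n ≤ j → u j = 0) :
    ∑ j ∈ Finset.Icc (-n+1) (n-1), (-u (j+2) + 2*u j - u (j-2)) * u j
      = 4 * ∑ ℓ ∈ Finset.Icc (-n+1) n, (u ℓ - u (ℓ-1))^2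
        - ∑ ℓ ∈ Finset.Icc (-n) n, (u (ℓ+1) - 2*u ℓ + u (ℓ-1))^2 := by
  have e1 : ∑ j ∈ Finset.Icc (-n+1) (n-1), (-u (j+2) + 2*u j - u (j-2)) * u j
      = ∑ j ∈ Finset.Icc (-n) n, (-u (j+2) + 2*u j - u (j-2)) * u j := by
    refine sum_ext' _ _ _ _ _ ?_ ?_ <;>
      · intro j hj
        simp only [Finset.mem_Icc, not_and_or, not_le] at hj
        rw [hu j (by omega), mul_zero]
  have e2 : ∑ ℓ ∈ Finset.Icc (-n+1) n, (u ℓ - u (ℓ-1))^2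
      = ∑ ℓ ∈ Finset.Icc (-n) n, (u ℓ - u (ℓ-1))^2 := by
    refine sum_ext' _ _ _ _ _ ?_ ?_ <;>
      · intro j hj
        simp only [Finset.mem_Icc, not_and_or, not_le] at hj
        rw [hu j (by omega), hu (j-1) (by omega)]
        ring
  rw [e1, e2, ← sub_eq_zero, Finset.mul_sum, ← Finset.sum_sub_distrib,
    ← Finset.sum_sub_distrib]
  have h := telescope' (fun j => -u (j+2) * u j - 4 * (u (j+1) * u j) + u (j+1)^2
    + 3 * u j ^2 + u (j+1) * u (j-1)) (-n) n (by omega)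
  rw [Finset.sum_congr rfl (fun j _ => by ring_nf :
    ∀ j ∈ Finset.Icc (-n) n,
      (-u (j+2) + 2*u j - u (j-2)) * u j - (4 * (u j - u (j-1))^2
        - (u (j+1) - 2*u j + u (j-1))^2)
      = (-u (j+2) * u j - 4 * (u (j+1) * u j) + u (j+1)^2 + 3 * u j ^2
          + u (j+1) * u (j-1))
        - (-u (j-1+2) * u (j-1) - 4 * (u (j-1+1) * u (j-1)) + u (j-1+1)^2
          + 3 * u (j-1) ^2 + u (j-1+1) * u (j-1-1))), h]
  rw [hu n (Or.inr le_rfl), hu (n+1) (by omega), hu (n+2) (by omega),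
    hu (-n-1) (by omega), hu (-n-1+1) (by omega), hu (-n-1-1) (by omega)]
  ring

/-- numerator normalization -/
private lemma numer_eq (n : ℤ) (ε : ℝ) (hε : ε ≠ 0) (u : ℤ → ℝ) :
    ε * ∑ ℓ ∈ Finset.Icc (-n) n, ((u (ℓ+1) - 2*u ℓ + u (ℓ-1)) / ε^2)^2
      = (∑ ℓ ∈ Finset.Icc (-n) n, (u (ℓ+1) - 2*u ℓ + u (ℓ-1))^2) / ε^3 := by
  rw [Finset.sum_congr rfl (fun ℓ _ => div_pow _ _ 2), ← Finset.sum_div]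
  field_simp

/-- denominator normalization -/
private lemma denom_eq (n : ℤ) (ε : ℝ) (hε : ε ≠ 0) (u : ℤ → ℝ) :
    ε * ∑ ℓ ∈ Finset.Icc (-n+1) n, ((u ℓ - u (ℓ-1)) / ε)^2
      = (∑ ℓ ∈ Finset.Icc (-n+1) n, (u ℓ - u (ℓ-1))^2) / ε := by
  rw [Finset.sum_congr rfl (fun ℓ _ => div_pow _ _ 2), ← Finset.sum_div]
  field_simp

/-- the quadratic form identity ⟨L^a u, u⟩ = A_F ‖u'‖² − ε² φ''_{2F} ‖u''‖² in raw form -/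
private lemma energy_eq (n : ℤ) (hn : 1 ≤ n) (ε φF φ2F : ℝ) (hε : ε ≠ 0) (u : ℤ → ℝ)
    (hu : ∀ j, j ≤ -n ∨ n ≤ j → u j = 0) :
    ε * ∑ j ∈ Finset.Icc (-n+1) (n-1),
        (φF * ((-u (j+1) + 2*u j - u (j-1)) / ε^2)
          + φ2F * ((-u (j+2) + 2*u j - u (j-2)) / ε^2)) * u j
      = ((φF + 4*φ2F) * (∑ ℓ ∈ Finset.Icc (-n+1) n, (u ℓ - u (ℓ-1))^2)
          - φ2F * ∑ ℓ ∈ Finset.Icc (-n) n, (u (ℓ+1) - 2*u ℓ + u (ℓ-1))^2) / ε := by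
  have hc : ∀ j ∈ Finset.Icc (-n+1) (n-1),
      (φF * ((-u (j+1) + 2*u j - u (j-1)) / ε^2)
        + φ2F * ((-u (j+2) + 2*u j - u (j-2)) / ε^2)) * u j
      = (φF * ((-u (j+1) + 2*u j - u (j-1)) * u j)
          + φ2F * ((-u (j+2) + 2*u j - u (j-2)) * u j)) / ε^2 := by
    intro j _; field_simp
  rw [Finset.sum_congr rfl hc, ← Finset.sum_div, Finset.sum_add_distrib,
    ← Finset.mul_sum, ← Finset.mul_sum, identI' n hn u hu, identII' n hn u hu]
  field_simp
  ring

/-- if all first differences vanish then u = 0 -/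
private lemma dsum_pos (n : ℤ) (hn : 1 ≤ n) (u : ℤ → ℝ)
    (hu : ∀ j, j ≤ -n ∨ n ≤ j → u j = 0) (hune : u ≠ 0) :
    0 < ∑ ℓ ∈ Finset.Icc (-n+1) n, (u ℓ - u (ℓ-1))^2 := by
  have hnn : 0 ≤ ∑ ℓ ∈ Finset.Icc (-n+1) n, (u ℓ - u (ℓ-1))^2 :=
    Finset.sum_nonneg fun _ _ => sq_nonneg _
  rcases hnn.lt_or_eq with h | h
  · exact h
  exfalso; apply hune
  have hz := (Finset.sum_eq_zero_iff_of_nonneg (fun _ _ => sq_nonneg _)).1 h.symm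
  have step : ∀ ℓ, -n+1 ≤ ℓ → ℓ ≤ n → u ℓ = u (ℓ-1) := by
    intro ℓ h1 h2
    have := hz ℓ (Finset.mem_Icc.2 ⟨h1, h2⟩)
    have h3 : u ℓ - u (ℓ-1) = 0 := by
      have := sq_eq_zero_iff.1 this; exact this
    linarith
  have main : ∀ j, -n ≤ j → (j ≤ n → u j = 0) := by
    refine Int.le_induction ?_ ?_
    · intro _; exact hu (-n) (Or.inl le_rfl)
    · intro j hj ih hj2
      have e := step (j+1) (by omega) hj2
      rw [show j+1-1 = j by ring] at e
      rw [e]; exact ih (by omega)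
  funext j
  show u j = 0
  by_cases h1 : -n ≤ j ∧ j ≤ n
  · exact main j h1.1 h1.2
  · exact hu j (by omega)

/-- if all second differences vanish then u = 0 -/
private lemma qsum_pos (n : ℤ) (hn : 1 ≤ n) (u : ℤ → ℝ)
    (hu : ∀ j, j ≤ -n ∨ n ≤ j → u j = 0) (hune : u ≠ 0) :
    0 < ∑ ℓ ∈ Finset.Icc (-n) n, (u (ℓ+1) - 2*u ℓ + u (ℓ-1))^2 := by
  have hnn : 0 ≤ ∑ ℓ ∈ Finset.Icc (-n) n, (u (ℓ+1) - 2*u ℓ + u (ℓ-1))^2 :=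
    Finset.sum_nonneg fun _ _ => sq_nonneg _
  rcases hnn.lt_or_eq with h | h
  · exact h
  exfalso; apply hune
  have hz : ∀ ℓ, -n ≤ ℓ → ℓ ≤ n → u (ℓ+1) - 2*u ℓ + u (ℓ-1) = 0 := by
    intro ℓ h1 h2
    have := (Finset.sum_eq_zero_iff_of_nonneg (fun _ _ => sq_nonneg _)).1 h.symm
      ℓ (Finset.mem_Icc.2 ⟨h1, h2⟩)
    exact sq_eq_zero_iff.1 this
  have claim : ∀ j, -n ≤ j → (j ≤ n+1 → u j = u (j-1)) := by
    refine Int.le_induction ?_ ?_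
    · intro _
      rw [hu (-n) (Or.inl le_rfl), hu (-n-1) (by omega)]
    · intro j hj ih hj2
      have e := hz j hj (by omega)
      have e2 := ih (by omega)
      rw [show j+1-1 = j by ring]
      linarith
  have main : ∀ j, -n ≤ j → (j ≤ n → u j = 0) := by
    refine Int.le_induction ?_ ?_
    · intro _; exact hu (-n) (Or.inl le_rfl)
    · intro j hj ih hj2
      have e := claim (j+1) (by omega) (by omega)
      rw [show j+1-1 = j by ring] at e
      rw [e]; exact ih (by omega)
  funext j
  show u j = 0
  by_cases h1 : -n ≤ j ∧ j ≤ n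
  · exact main j h1.1 h1.2
  · exact hu j (by omega)

/-- sharp stability of the atomistic operator in terms of ν_ε,
with 0 < ν_ε ≤ C for a universal constant C independent of N. -/
theorem atomistic_stability_nu :
    ∃ C : ℝ, 0 < C ∧
      ∀ (N : ℕ), 2 ≤ N → ∀ (ε φF φ2F : ℝ), ε = 1 / N → φ2F ≤ 0 →
        ∀ νε : ℝ,
          IsLeast {r : ℝ | ∃ u : ℤ → ℝ,
              (∀ j : ℤ, (N : ℤ) ≤ |j| → u j = 0) ∧ u ≠ 0 ∧
              r = (ε * ∑ ℓ ∈ Finset.Icc (-(N : ℤ)) (N : ℤ),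
                      ((u (ℓ + 1) - 2 * u ℓ + u (ℓ - 1)) / ε ^ 2) ^ 2)
                  / (ε * ∑ ℓ ∈ Finset.Icc (-(N : ℤ) + 1) (N : ℤ),
                      ((u ℓ - u (ℓ - 1)) / ε) ^ 2)} νε →
          (0 < νε ∧ νε ≤ C ∧
            IsGLB {q : ℝ | ∃ u : ℤ → ℝ,
                (∀ j : ℤ, (N : ℤ) ≤ |j| → u j = 0) ∧
                ε * ∑ ℓ ∈ Finset.Icc (-(N : ℤ) + 1) (N : ℤ),
                    ((u ℓ - u (ℓ - 1)) / ε) ^ 2 = 1 ∧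
                q = ε * ∑ j ∈ Finset.Icc (-(N : ℤ) + 1) ((N : ℤ) - 1),
                    (φF * ((-u (j + 1) + 2 * u j - u (j - 1)) / ε ^ 2)
                      + φ2F * ((-u (j + 2) + 2 * u j - u (j - 2)) / ε ^ 2)) * u j}
              ((φF + 4 * φ2F) - ε ^ 2 * νε * φ2F)) := by
  refine ⟨432, by norm_num, ?_⟩
  intro N hN ε φF φ2F hε hφ νε hleast
  subst hε
  have hn1 : 1 ≤ (N : ℤ) := by exact_mod_cast (by omega : (1:ℕ) ≤ N)
  have hy : (2:ℝ) ≤ (N : ℝ) := by exact_mod_cast hN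
  have hy0 : (0:ℝ) < (N : ℝ) := by linarith
  have hεne : (1:ℝ)/(N:ℝ) ≠ 0 := by positivity
  have hεpos : (0:ℝ) < 1/(N:ℝ) := by positivity
  -- the minimizer
  obtain ⟨u₀, hu₀a, hu₀ne, hν⟩ := hleast.1
  have hu₀ : ∀ j, j ≤ -(N:ℤ) ∨ (N:ℤ) ≤ j → u₀ j = 0 := fun j h =>
    hu₀a j (by rcases abs_cases j with ⟨h1,h2⟩|⟨h1,h2⟩ <;> omega)
  have hD₀ : 0 < ∑ ℓ ∈ Finset.Icc (-(N:ℤ)+1) (N:ℤ), (u₀ ℓ - u₀ (ℓ-1))^2 :=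
    dsum_pos _ hn1 u₀ hu₀ hu₀ne
  have hQ₀ : 0 < ∑ ℓ ∈ Finset.Icc (-(N:ℤ)) (N:ℤ), (u₀ (ℓ+1) - 2*u₀ ℓ + u₀ (ℓ-1))^2 :=
    qsum_pos _ hn1 u₀ hu₀ hu₀ne
  rw [numer_eq _ _ hεne, denom_eq _ _ hεne] at hν
  have hνpos : 0 < νε := by
    rw [hν]
    exact div_pos (div_pos hQ₀ (by positivity)) (div_pos hD₀ hεpos)
  refine ⟨hνpos, ?_, ?_⟩
  · -- νε ≤ 432 via the test function w j = (N² - j²)²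
    set w : ℤ → ℝ := fun j => if |j| ≤ (N:ℤ) then ((N:ℝ)^2 - (j:ℝ)^2)^2 else 0 with hwdef
    have hwval : ∀ j : ℤ, |j| ≤ (N:ℤ) → w j = ((N:ℝ)^2 - (j:ℝ)^2)^2 := fun j h => if_pos h
    have hwa : ∀ j : ℤ, (N:ℤ) ≤ |j| → w j = 0 := by
      intro j hj
      by_cases h : |j| ≤ (N:ℤ)
      · have hj2 : j = (N:ℤ) ∨ j = -(N:ℤ) := by
          rcases abs_cases j with ⟨h1,h2⟩|⟨h1,h2⟩ <;> omega
        rw [hwval j h]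
        rcases hj2 with rfl | rfl <;> · push_cast; ring
      · exact if_neg h
    have hw : ∀ j, j ≤ -(N:ℤ) ∨ (N:ℤ) ≤ j → w j = 0 := fun j h =>
      hwa j (by rcases abs_cases j with ⟨h1,h2⟩|⟨h1,h2⟩ <;> omega)
    have hw0 : w 0 = (N:ℝ)^4 := by
      rw [hwval 0 (by simp only [abs_zero]; omega)]; push_cast; ring
    have hwne : w ≠ 0 := by
      intro h
      have h2 := congrFun h 0
      rw [hw0] at h2
      simp only [Pi.zero_apply] at h2
      have : (0:ℝ) < (N:ℝ)^4 := by positivity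
      linarith
    have hbd : ∀ ℓ ∈ Finset.Icc (-(N:ℤ)) (N:ℤ),
        (w (ℓ+1) - 2*w ℓ + w (ℓ-1))^2 ≤ 144*(N:ℝ)^4 := by
      intro ℓ hℓ
      rw [Finset.mem_Icc] at hℓ
      by_cases hA : -(N:ℤ)+1 ≤ ℓ ∧ ℓ ≤ (N:ℤ)-1
      · rw [hwval (ℓ+1) (by rcases abs_cases (ℓ+1) with ⟨h1,h2⟩|⟨h1,h2⟩ <;> omega),
          hwval ℓ (by rcases abs_cases ℓ with ⟨h1,h2⟩|⟨h1,h2⟩ <;> omega),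
          hwval (ℓ-1) (by rcases abs_cases (ℓ-1) with ⟨h1,h2⟩|⟨h1,h2⟩ <;> omega)]
        push_cast
        have hx1 : (ℓ:ℝ) ≤ (N:ℝ)-1 := by
          have : (ℓ:ℝ) ≤ ((N:ℤ):ℝ) - 1 := by exact_mod_cast (by omega : (ℓ:ℤ) ≤ (N:ℤ)-1)
          simpa using this
        have hx2 : -((N:ℝ)-1) ≤ (ℓ:ℝ) := by
          have : (-(N:ℤ)+1 : ℝ) ≤ (ℓ:ℝ) := by exact_mod_cast (by omega : -(N:ℤ)+1 ≤ ℓ)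
          push_cast at this; linarith
        have hx : (ℓ:ℝ)^2 ≤ ((N:ℝ)-1)^2 := sq_le_sq' hx2 hx1
        have key : (12*(ℓ:ℝ)^2 - 4*(N:ℝ)^2 + 2)^2 ≤ (12*(N:ℝ)^2)^2 := by
          apply sq_le_sq' <;> nlinarith [hy]
        have e : ((N:ℝ)^2 - ((ℓ:ℝ)+1)^2)^2 - 2*((N:ℝ)^2 - (ℓ:ℝ)^2)^2
            + ((N:ℝ)^2 - ((ℓ:ℝ)-1)^2)^2 = 12*(ℓ:ℝ)^2 - 4*(N:ℝ)^2 + 2 := by ring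
        nlinarith [key, e]
      · have hB : ℓ = (N:ℤ) ∨ ℓ = -(N:ℤ) := by omega
        have h1 : (2*(N:ℝ)-1)^2 ≤ 4*(N:ℝ)^2 := by nlinarith [hy]
        have h2 : ((2*(N:ℝ)-1)^2)^2 ≤ (4*(N:ℝ)^2)^2 :=
          mul_self_le_mul_self (sq_nonneg _) h1 |>.trans_eq (by ring) |>.trans_eq' (by ring)
        rcases hB with rfl | rfl
        · rw [hw ((N:ℤ)+1) (Or.inr (by omega)), hw (N:ℤ) (Or.inr le_rfl),
            hwval ((N:ℤ)-1) (by rcases abs_cases ((N:ℤ)-1) with ⟨ha1,ha2⟩|⟨ha1,ha2⟩ <;> omega)]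
          push_cast
          nlinarith [h2, hy]
        · rw [hw (-(N:ℤ)-1) (Or.inl (by omega)), hw (-(N:ℤ)) (Or.inl le_rfl),
            hwval (-(N:ℤ)+1) (by rcases abs_cases (-(N:ℤ)+1) with ⟨ha1,ha2⟩|⟨ha1,ha2⟩ <;> omega)]
          push_cast
          nlinarith [h2, hy]
    have hQw : ∑ ℓ ∈ Finset.Icc (-(N:ℤ)) (N:ℤ), (w (ℓ+1) - 2*w ℓ + w (ℓ-1))^2
        ≤ (2*(N:ℝ)+1) * (144*(N:ℝ)^4) := by
      have hcard : (((Finset.Icc (-(N:ℤ)) (N:ℤ)).card : ℕ) : ℝ) = 2*(N:ℝ)+1 := by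
        rw [Int.card_Icc]
        have : ((N:ℤ) + 1 - -(N:ℤ)).toNat = 2*N+1 := by omega
        rw [this]; push_cast; ring
      calc ∑ ℓ ∈ Finset.Icc (-(N:ℤ)) (N:ℤ), (w (ℓ+1) - 2*w ℓ + w (ℓ-1))^2
          ≤ (Finset.Icc (-(N:ℤ)) (N:ℤ)).card • (144*(N:ℝ)^4) :=
            Finset.sum_le_card_nsmul _ _ _ hbd
        _ = (2*(N:ℝ)+1) * (144*(N:ℝ)^4) := by rw [nsmul_eq_mul, hcard]
    have hDw : (N:ℝ)^7 ≤ ∑ ℓ ∈ Finset.Icc (-(N:ℤ)+1) (N:ℤ), (w ℓ - w (ℓ-1))^2 := by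
      have h1 : ∑ ℓ ∈ Finset.Icc (-(N:ℤ)+1) 0, (w ℓ - w (ℓ-1))^2
          ≤ ∑ ℓ ∈ Finset.Icc (-(N:ℤ)+1) (N:ℤ), (w ℓ - w (ℓ-1))^2 :=
        Finset.sum_le_sum_of_subset_of_nonneg
          (Finset.Icc_subset_Icc le_rfl (by omega)) (fun _ _ _ => sq_nonneg _)
      have htel : ∑ ℓ ∈ Finset.Icc (-(N:ℤ)+1) 0, (w ℓ - w (ℓ-1)) = (N:ℝ)^4 := by
        rw [telescope' w (-(N:ℤ)+1) 0 (by omega),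
          show -(N:ℤ)+1-1 = -(N:ℤ) by ring, hw (-(N:ℤ)) (Or.inl le_rfl), hw0]
        ring
      have hCS := Finset.sum_mul_sq_le_sq_mul_sq (Finset.Icc (-(N:ℤ)+1) 0)
        (fun _ => (1:ℝ)) (fun ℓ => w ℓ - w (ℓ-1))
      simp only [one_mul, one_pow] at hCS
      rw [htel] at hCS
      have hcard0 : (∑ _ℓ ∈ Finset.Icc (-(N:ℤ)+1) 0, (1:ℝ)) = (N:ℝ) := by
        rw [Finset.sum_const, nsmul_eq_mul, mul_one]
        have : (Finset.Icc (-(N:ℤ)+1) 0).card = N := by rw [Int.card_Icc]; omega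
        rw [this]
      rw [hcard0] at hCS
      nlinarith [hCS, mul_le_mul_of_nonneg_left h1 hy0.le, hy0, hy]
    have hb := hleast.2 ⟨w, hwa, hwne, rfl⟩
    rw [numer_eq _ _ hεne, denom_eq _ _ hεne] at hb
    have hDwpos : 0 < ∑ ℓ ∈ Finset.Icc (-(N:ℤ)+1) (N:ℤ), (w ℓ - w (ℓ-1))^2 :=
      lt_of_lt_of_le (by positivity) hDw
    refine hb.trans ?_
    have e1 : (∑ ℓ ∈ Finset.Icc (-(N:ℤ)) (N:ℤ), (w (ℓ+1) - 2*w ℓ + w (ℓ-1))^2)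
        / ((1:ℝ)/(N:ℝ))^3
        = (∑ ℓ ∈ Finset.Icc (-(N:ℤ)) (N:ℤ), (w (ℓ+1) - 2*w ℓ + w (ℓ-1))^2) * (N:ℝ)^3 := by
      field_simp
    have e2 : (∑ ℓ ∈ Finset.Icc (-(N:ℤ)+1) (N:ℤ), (w ℓ - w (ℓ-1))^2) / ((1:ℝ)/(N:ℝ))
        = (∑ ℓ ∈ Finset.Icc (-(N:ℤ)+1) (N:ℤ), (w ℓ - w (ℓ-1))^2) * (N:ℝ) := by
      field_simp
    rw [e1, e2, div_le_iff₀ (by positivity)]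
    nlinarith [mul_le_mul_of_nonneg_right hQw (by positivity : (0:ℝ) ≤ (N:ℝ)^3),
      mul_le_mul_of_nonneg_left hDw (by positivity : (0:ℝ) ≤ 432*(N:ℝ)), hy,
      pow_pos hy0 7]

  · -- IsGLB: the value is attained by the scaled minimizer and is a lower bound
    have hD0ne : (∑ ℓ ∈ Finset.Icc (-(N:ℤ)+1) (N:ℤ), (u₀ ℓ - u₀ (ℓ-1))^2) ≠ 0 :=
      ne_of_gt hD₀
    refine IsLeast.isGLB ⟨?_, ?_⟩
    · -- membership
      have hDN : (0:ℝ) < (∑ ℓ ∈ Finset.Icc (-(N:ℤ)+1) (N:ℤ), (u₀ ℓ - u₀ (ℓ-1))^2) * (N:ℝ) :=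
        mul_pos hD₀ hy0
      set c : ℝ := Real.sqrt ((∑ ℓ ∈ Finset.Icc (-(N:ℤ)+1) (N:ℤ),
        (u₀ ℓ - u₀ (ℓ-1))^2) * (N:ℝ)) with hcdef
      have hc2 : c^2 = (∑ ℓ ∈ Finset.Icc (-(N:ℤ)+1) (N:ℤ), (u₀ ℓ - u₀ (ℓ-1))^2) * (N:ℝ) :=
        Real.sq_sqrt hDN.le
      have hcpos : 0 < c := Real.sqrt_pos.2 hDN
      have hcne : c ≠ 0 := ne_of_gt hcpos
      refine ⟨fun j => u₀ j / c, fun j hj => by show u₀ j / c = 0; rw [hu₀a j hj, zero_div],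
        ?_, ?_⟩
      · beta_reduce
        rw [denom_eq _ _ hεne]
        have e : ∑ ℓ ∈ Finset.Icc (-(N:ℤ)+1) (N:ℤ), (u₀ ℓ / c - u₀ (ℓ-1) / c)^2
            = (∑ ℓ ∈ Finset.Icc (-(N:ℤ)+1) (N:ℤ), (u₀ ℓ - u₀ (ℓ-1))^2) / c^2 := by
          rw [Finset.sum_congr rfl (fun ℓ _ => by rw [div_sub_div_same, div_pow]),
            ← Finset.sum_div]
        rw [e, hc2]
        field_simp
      · beta_reduce
        have hadm : ∀ j : ℤ, j ≤ -(N:ℤ) ∨ (N:ℤ) ≤ j → (fun j => u₀ j / c) j = 0 := by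
          intro j hj
          show u₀ j / c = 0
          rcases hj with h|h
          · rw [hu₀ j (Or.inl h), zero_div]
          · rw [hu₀ j (Or.inr h), zero_div]
        have hE := energy_eq (N:ℤ) hn1 (1/(N:ℝ)) φF φ2F hεne (fun j => u₀ j / c) hadm
        beta_reduce at hE
        rw [hE]
        have eD : ∑ ℓ ∈ Finset.Icc (-(N:ℤ)+1) (N:ℤ), (u₀ ℓ / c - u₀ (ℓ-1) / c)^2
            = (∑ ℓ ∈ Finset.Icc (-(N:ℤ)+1) (N:ℤ), (u₀ ℓ - u₀ (ℓ-1))^2) / c^2 := by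
          rw [Finset.sum_congr rfl (fun ℓ _ => by rw [div_sub_div_same, div_pow]),
            ← Finset.sum_div]
        have eQ : ∑ ℓ ∈ Finset.Icc (-(N:ℤ)) (N:ℤ),
              (u₀ (ℓ+1) / c - 2*(u₀ ℓ / c) + u₀ (ℓ-1) / c)^2
            = (∑ ℓ ∈ Finset.Icc (-(N:ℤ)) (N:ℤ), (u₀ (ℓ+1) - 2*u₀ ℓ + u₀ (ℓ-1))^2) / c^2 := by
          rw [Finset.sum_congr rfl (fun ℓ _ => by
            rw [show u₀ (ℓ+1)/c - 2*(u₀ ℓ/c) + u₀ (ℓ-1)/c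
              = (u₀ (ℓ+1) - 2*u₀ ℓ + u₀ (ℓ-1))/c from by ring, div_pow]),
            ← Finset.sum_div]
        rw [eD, eQ, hc2, hν]
        field_simp
    · -- lower bound
      rintro q ⟨u, hua, hcon, hqe⟩
      have hu' : ∀ j, j ≤ -(N:ℤ) ∨ (N:ℤ) ≤ j → u j = 0 := fun j h =>
        hua j (by rcases abs_cases j with ⟨h1,h2⟩|⟨h1,h2⟩ <;> omega)
      rw [denom_eq _ _ hεne] at hcon
      have hDε : ∑ ℓ ∈ Finset.Icc (-(N:ℤ)+1) (N:ℤ), (u ℓ - u (ℓ-1))^2 = 1/(N:ℝ) := by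
        field_simp at hcon ⊢
        linarith
      have hune : u ≠ 0 := by
        intro h
        rw [h] at hDε
        simp only [Pi.zero_apply, sub_zero, ne_eq, OfNat.ofNat_ne_zero,
          not_false_eq_true, zero_pow, Finset.sum_const_zero] at hDε
        have := hεpos
        rw [← hDε] at this
        exact lt_irrefl _ this
      have hb := hleast.2 ⟨u, hua, hune, by rw [numer_eq _ _ hεne, denom_eq _ _ hεne]⟩
      rw [hDε, div_self hεne, div_one] at hb
      have he3 : νε * ((1:ℝ)/(N:ℝ))^3
          ≤ ∑ ℓ ∈ Finset.Icc (-(N:ℤ)) (N:ℤ), (u (ℓ+1) - 2*u ℓ + u (ℓ-1))^2 :=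
        (le_div_iff₀ (by positivity)).1 hb
      have hqe2 : q * ((1:ℝ)/(N:ℝ)) = (φF + 4*φ2F) * (1/(N:ℝ))
          - φ2F * ∑ ℓ ∈ Finset.Icc (-(N:ℤ)) (N:ℤ), (u (ℓ+1) - 2*u ℓ + u (ℓ-1))^2 := by
        rw [hqe, energy_eq _ hn1 _ φF φ2F hεne _ hu', hDε, div_mul_cancel₀ _ hεne]
      have hM : φ2F * (∑ ℓ ∈ Finset.Icc (-(N:ℤ)) (N:ℤ), (u (ℓ+1) - 2*u ℓ + u (ℓ-1))^2)
          ≤ φ2F * (νε * ((1:ℝ)/(N:ℝ))^3) := mul_le_mul_of_nonpos_left he3 hφ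
      have hfin : ((φF + 4*φ2F) - (1/(N:ℝ))^2*νε*φ2F) * ((1:ℝ)/(N:ℝ))
          ≤ q * ((1:ℝ)/(N:ℝ)) := by
        rw [hqe2]; nlinarith [hM]
      exact le_of_mul_le_mul_right hfin hεpos
end

section
/- Let û ∈ U be the displacement with strain û'_ℓ = 1 for ℓ = −K−1, û'_ℓ = −1 for ℓ = K+2, and û'_ℓ = 0 otherwise. Then ⟨L^{qce} û, û⟩ = (A_F + (1/2)φ''_{2F}) ‖û'‖²_{ℓ²_ε}. In particular, if A_F + (1/2)φ''_{2F} < 0 then L^{qce} is indefinite. -/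
/-- The quadratic form of the QCE operator, via its decomposition. -/
noncomputable def Qqce (N K : ℕ) (ε φF φ2F : ℝ) (u : ℤ → ℝ) : ℝ :=
  let AF := φF + 4 * φ2F
  let du : ℤ → ℝ := fun ℓ => (u ℓ - u (ℓ - 1)) / ε
  let ddu : ℤ → ℝ := fun ℓ => (u (ℓ + 1) - 2 * u ℓ + u (ℓ - 1)) / ε ^ 2
  (∑ ℓ ∈ Finset.Icc (-(N : ℤ) + 1) (-(K : ℤ) - 2), ε * AF * du ℓ ^ 2)
    + (∑ ℓ ∈ Finset.Icc ((K : ℤ) + 3) (N : ℤ), ε * AF * du ℓ ^ 2)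
    + (∑ ℓ ∈ Finset.Icc (-(K : ℤ) + 2) ((K : ℤ) - 1),
        ε * (AF * du ℓ ^ 2 - ε ^ 2 * φ2F * ddu ℓ ^ 2))
    + ε * ((AF - φ2F) * (du (-(K : ℤ) + 1) ^ 2 + du (K : ℤ) ^ 2)
        + AF * (du (-(K : ℤ)) ^ 2 + du ((K : ℤ) + 1) ^ 2)
        + (AF + φ2F) * (du (-(K : ℤ) - 1) ^ 2 + du ((K : ℤ) + 2) ^ 2)
        - ε ^ 2 / 2 * φ2F * (ddu (-(K : ℤ)) ^ 2 + ddu (-(K : ℤ) - 1) ^ 2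
            + ddu (K : ℤ) ^ 2 + ddu ((K : ℤ) + 1) ^ 2))

/-- the test displacement û with û'_{-K-1}=1, û'_{K+2}=-1 and
û' = 0 otherwise satisfies ⟨L^{qce}û,û⟩ = (A_F + φ2F/2)‖û'‖² with
‖û'‖² = 2ε; hence L^{qce} is indefinite when A_F + φ2F/2 < 0. -/
theorem qce_indefinite_test_function
    (N K : ℕ) (hK : 1 ≤ K) (hN : K + 2 ≤ N) (ε φF φ2F : ℝ) (hε : ε = 1 / N)
    (u : ℤ → ℝ)
    (hu : ∀ ℓ : ℤ, u ℓ = if -(K : ℤ) - 1 ≤ ℓ ∧ ℓ ≤ (K : ℤ) + 1 then ε else 0) :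
    Qqce N K ε φF φ2F u = ((φF + 4 * φ2F) + 1 / 2 * φ2F) * (2 * ε) ∧
    ((φF + 4 * φ2F) + 1 / 2 * φ2F < 0 → Qqce N K ε φF φ2F u < 0) := by
  have hNpos : 0 < N := by omega
  have hεpos : (0:ℝ) < ε := by
    rw [hε]; positivity
  have hε0 : ε ≠ 0 := ne_of_gt hεpos
  have hu' : ∀ ℓ : ℤ, -(K : ℤ) - 1 ≤ ℓ → ℓ ≤ (K : ℤ) + 1 → u ℓ = ε := by
    intro ℓ h1 h2; rw [hu]; exact if_pos ⟨h1, h2⟩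
  have hu0 : ∀ ℓ : ℤ, ¬(-(K : ℤ) - 1 ≤ ℓ ∧ ℓ ≤ (K : ℤ) + 1) → u ℓ = 0 := by
    intro ℓ h; rw [hu]; exact if_neg h
  have hmain : Qqce N K ε φF φ2F u = ((φF + 4 * φ2F) + 1 / 2 * φ2F) * (2 * ε) := by
    simp only [Qqce]
    have s1 : (∑ ℓ ∈ Finset.Icc (-(N : ℤ) + 1) (-(K : ℤ) - 2),
        ε * (φF + 4 * φ2F) * ((u ℓ - u (ℓ - 1)) / ε) ^ 2) = 0 := by
      apply Finset.sum_eq_zero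
      intro ℓ hℓ
      rw [Finset.mem_Icc] at hℓ
      have h : u ℓ = u (ℓ - 1) := by
        rw [hu ℓ, hu (ℓ - 1)]
        split_ifs <;> first | rfl | omega
      rw [h]; ring
    have s2 : (∑ ℓ ∈ Finset.Icc ((K : ℤ) + 3) (N : ℤ),
        ε * (φF + 4 * φ2F) * ((u ℓ - u (ℓ - 1)) / ε) ^ 2) = 0 := by
      apply Finset.sum_eq_zero
      intro ℓ hℓ
      rw [Finset.mem_Icc] at hℓ
      have h : u ℓ = u (ℓ - 1) := by
        rw [hu ℓ, hu (ℓ - 1)]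
        split_ifs <;> first | rfl | omega
      rw [h]; ring
    have s3 : (∑ ℓ ∈ Finset.Icc (-(K : ℤ) + 2) ((K : ℤ) - 1),
        ε * ((φF + 4 * φ2F) * ((u ℓ - u (ℓ - 1)) / ε) ^ 2
          - ε ^ 2 * φ2F * ((u (ℓ + 1) - 2 * u ℓ + u (ℓ - 1)) / ε ^ 2) ^ 2)) = 0 := by
      apply Finset.sum_eq_zero
      intro ℓ hℓ
      rw [Finset.mem_Icc] at hℓ
      have h1 : u (ℓ + 1) = ε := hu' _ (by omega) (by omega)
      have h2 : u ℓ = ε := hu' _ (by omega) (by omega)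
      have h3 : u (ℓ - 1) = ε := hu' _ (by omega) (by omega)
      rw [h1, h2, h3]; ring
    rw [s1, s2, s3]
    have e1 : u (-(K : ℤ) + 1) = ε := hu' _ (by omega) (by omega)
    have e2 : u (-(K : ℤ) + 1 - 1) = ε := hu' _ (by omega) (by omega)
    have e3 : u ((K : ℤ)) = ε := hu' _ (by omega) (by omega)
    have e4 : u ((K : ℤ) - 1) = ε := hu' _ (by omega) (by omega)
    have e5 : u (-(K : ℤ)) = ε := hu' _ (by omega) (by omega)
    have e6 : u (-(K : ℤ) - 1) = ε := hu' _ (by omega) (by omega)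
    have e7 : u ((K : ℤ) + 1) = ε := hu' _ (by omega) (by omega)
    have e8 : u ((K : ℤ) + 1 - 1) = ε := hu' _ (by omega) (by omega)
    have e9 : u (-(K : ℤ) - 1 - 1) = 0 := hu0 _ (by omega)
    have e10 : u ((K : ℤ) + 2) = 0 := hu0 _ (by omega)
    have e11 : u ((K : ℤ) + 2 - 1) = ε := hu' _ (by omega) (by omega)
    have e12 : u (-(K : ℤ) - 1 + 1) = ε := hu' _ (by omega) (by omega)
    have e13 : u ((K : ℤ) + 1 + 1) = 0 := hu0 _ (by omega)
    rw [e1, e2, e3, e4, e5, e6, e7, e8, e9, e10, e11, e12, e13]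
    field_simp
    ring
  refine ⟨hmain, fun h => ?_⟩
  rw [hmain]
  have : (0:ℝ) < 2 * ε := by linarith
  exact mul_neg_of_neg_of_pos h this
end

section
/- The polynomial q(z) = 4z⁵ − 12z⁴ + 9z³ − 3z² − 4z + 2 has a real root ẑ with 2.2 < ẑ < 2.21, and for this root λ̂ = (ẑ² + 1)/ẑ + 2 satisfies 4.659 < λ̂ < 4.66. -/
/-- the quintic q(z) = 4z⁵ − 12z⁴ + 9z³ − 3z² − 4z + 2 has a real
root ẑ ∈ (2.2, 2.21), and λ̂ = (ẑ²+1)/ẑ + 2 ∈ (4.659, 4.66). -/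
theorem qce_interface_polynomial_root :
    ∃ z : ℝ, 2.2 < z ∧ z < 2.21 ∧
      4 * z ^ 5 - 12 * z ^ 4 + 9 * z ^ 3 - 3 * z ^ 2 - 4 * z + 2 = 0 ∧
      4.659 < (z ^ 2 + 1) / z + 2 ∧ (z ^ 2 + 1) / z + 2 < 4.66 := by
  have hcont : ContinuousOn (fun z : ℝ =>
      4 * z ^ 5 - 12 * z ^ 4 + 9 * z ^ 3 - 3 * z ^ 2 - 4 * z + 2)
      (Set.Icc (2.206 : ℝ) 2.2065) := by
    fun_prop
  have hle : (2.206 : ℝ) ≤ 2.2065 := by norm_num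
  have h0 : (0 : ℝ) ∈ Set.Icc
      (4 * (2.206:ℝ) ^ 5 - 12 * 2.206 ^ 4 + 9 * 2.206 ^ 3 - 3 * 2.206 ^ 2 - 4 * 2.206 + 2)
      (4 * (2.2065:ℝ) ^ 5 - 12 * 2.2065 ^ 4 + 9 * 2.2065 ^ 3 - 3 * 2.2065 ^ 2 - 4 * 2.2065 + 2) := by
    constructor <;> norm_num
  obtain ⟨z, hz, hroot⟩ := intermediate_value_Icc hle hcont h0
  obtain ⟨hz1, hz2⟩ := hz
  have hzpos : (0 : ℝ) < z := by linarith
  refine ⟨z, by linarith, by linarith, hroot, ?_, ?_⟩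
  · rw [div_add' _ _ _ (ne_of_gt hzpos), lt_div_iff₀ hzpos]
    nlinarith [sq_nonneg (z - 2.206)]
  · rw [div_add' _ _ _ (ne_of_gt hzpos), div_lt_iff₀ hzpos]
    nlinarith [mul_nonneg (sub_nonneg.2 hz1) (sub_nonneg.2 hz2)]
end

section
/- For u ∈ U, the dual characterization of the U^{1,p} norm holds: sup over v ∈ U with ‖v'‖_{ℓ^q_ε} = 1 of ⟨u', v'⟩ ≤ ‖u'‖_{ℓ^p_ε} ≤ 2 · sup over v ∈ U with ‖v'‖_{ℓ^q_ε} = 1 of ⟨u', v'⟩, where 1/p + 1/q = 1. -/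
open scoped ENNReal

/-- The ℓ^p_ε norm on strains (vectors indexed by ℓ = -N+1,…,N),
for an extended-real exponent p ∈ [1,∞]. -/
noncomputable def lpnorm (N : ℕ) (ε : ℝ) (p : ℝ≥0∞) (σ : ℤ → ℝ) : ℝ :=
  if p = ⊤ then ⨆ ℓ : Finset.Icc (-(N : ℤ) + 1) (N : ℤ), |σ (ℓ : ℤ)|
  else (ε * ∑ ℓ ∈ Finset.Icc (-(N : ℤ) + 1) (N : ℤ), |σ ℓ| ^ p.toReal)
    ^ (1 / p.toReal)

private lemma Icc_ne (N : ℕ) (hN : 2 ≤ N) :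
    (Finset.Icc (-(N : ℤ) + 1) (N : ℤ)).Nonempty := by
  refine ⟨0, ?_⟩
  simp only [Finset.mem_Icc]
  omega

private lemma Icc_card (N : ℕ) :
    (Finset.Icc (-(N : ℤ) + 1) (N : ℤ)).card = 2 * N := by
  rw [Int.card_Icc]
  omega

private lemma lpnorm_top (N : ℕ) (hN : 2 ≤ N) (ε : ℝ) (σ : ℤ → ℝ) :
    lpnorm N ε ⊤ σ =
      (Finset.Icc (-(N : ℤ) + 1) (N : ℤ)).sup' (Icc_ne N hN) (fun ℓ => |σ ℓ|) := by
  rw [lpnorm, if_pos rfl]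
  haveI : Nonempty ((Finset.Icc (-(N : ℤ) + 1) (N : ℤ)) : Type) :=
    Finset.nonempty_coe_sort.2 (Icc_ne N hN)
  apply le_antisymm
  · exact ciSup_le fun i => Finset.le_sup' (fun ℓ => |σ ℓ|) i.2
  · exact Finset.sup'_le _ _ fun b hb =>
      le_ciSup (f := fun ℓ : (Finset.Icc (-(N : ℤ) + 1) (N : ℤ)) => |σ (ℓ : ℤ)|)
        (Set.Finite.bddAbove (Set.finite_range _)) ⟨b, hb⟩

private lemma lpnorm_one (N : ℕ) (ε : ℝ) (σ : ℤ → ℝ) :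
    lpnorm N ε 1 σ = ε * ∑ ℓ ∈ Finset.Icc (-(N : ℤ) + 1) (N : ℤ), |σ ℓ| := by
  rw [lpnorm, if_neg (by simp)]
  simp [ENNReal.toReal_one]

private lemma telescope (f : ℤ → ℝ) (a : ℤ) (n : ℕ) :
    ∑ ℓ ∈ Finset.Icc (a + 1) (a + n), (f ℓ - f (ℓ - 1)) = f (a + n) - f a := by
  induction n with
  | zero => simp
  | succ n ih =>
    have hins : Finset.Icc (a + 1) (a + (n + 1 : ℕ)) =
        insert (a + (n + 1 : ℕ)) (Finset.Icc (a + 1) (a + n)) := by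
      ext x
      simp only [Finset.mem_Icc, Finset.mem_insert]
      push_cast
      omega
    have hnot : (a + (n + 1 : ℕ)) ∉ Finset.Icc (a + 1) (a + n) := by
      simp only [Finset.mem_Icc]
      push_cast
      omega
    rw [hins, Finset.sum_insert hnot, ih]
    have h2 : a + ((n : ℤ) + 1) - 1 = a + n := by ring
    push_cast
    rw [h2]
    ring

private lemma key (N : ℕ) (hN : 2 ≤ N) (ε : ℝ) (hε : ε = 1 / N)
    (np nq : (ℤ → ℝ) → ℝ)
    (np0 : ∀ σ, 0 ≤ np σ)
    (nq0 : ∀ σ, 0 ≤ nq σ)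
    (npneg : ∀ σ, np (fun ℓ => -σ ℓ) = np σ)
    (hol : ∀ σ τ, ε * ∑ ℓ ∈ Finset.Icc (-(N : ℤ) + 1) (N : ℤ), σ ℓ * τ ℓ ≤ np σ * nq τ)
    (att : ∀ σ, 0 < np σ → ∃ τ, nq τ = 1 ∧
      ε * ∑ ℓ ∈ Finset.Icc (-(N : ℤ) + 1) (N : ℤ), σ ℓ * τ ℓ = np σ)
    (tri : ∀ τ (c : ℝ), nq (fun ℓ => τ ℓ - c) ≤ nq τ + |c| * nq (fun _ => 1))
    (hom : ∀ τ (A : ℝ), 0 < A → nq τ = A → nq (fun ℓ => τ ℓ / A) = 1)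
    (congrq : ∀ τ τ', (∀ ℓ ∈ Finset.Icc (-(N : ℤ) + 1) (N : ℤ), τ ℓ = τ' ℓ) → nq τ = nq τ')
    (one2 : np (fun _ => 1) * nq (fun _ => 1) ≤ 2)
    (u : ℤ → ℝ) (hu : ∀ j : ℤ, (N : ℤ) ≤ |j| → u j = 0)
    (S : ℝ)
    (hS : S = sSup {s : ℝ | ∃ v : ℤ → ℝ,
      (∀ j : ℤ, (N : ℤ) ≤ |j| → v j = 0) ∧
      nq (fun ℓ => (v ℓ - v (ℓ - 1)) / ε) = 1 ∧
      s = ε * ∑ ℓ ∈ Finset.Icc (-(N : ℤ) + 1) (N : ℤ),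
        ((u ℓ - u (ℓ - 1)) / ε) * ((v ℓ - v (ℓ - 1)) / ε)}) :
    S ≤ np (fun ℓ => (u ℓ - u (ℓ - 1)) / ε) ∧
    np (fun ℓ => (u ℓ - u (ℓ - 1)) / ε) ≤ 2 * S := by
  have hNpos : (0:ℝ) < N := by
    have : (2:ℝ) ≤ N := by exact_mod_cast hN
    linarith
  have hεpos : 0 < ε := by rw [hε]; positivity
  set I : Finset ℤ := Finset.Icc (-(N : ℤ) + 1) (N : ℤ) with hIdef
  set du : ℤ → ℝ := fun ℓ => (u ℓ - u (ℓ - 1)) / ε with hdu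
  set Sset : Set ℝ := {s : ℝ | ∃ v : ℤ → ℝ,
      (∀ j : ℤ, (N : ℤ) ≤ |j| → v j = 0) ∧
      nq (fun ℓ => (v ℓ - v (ℓ - 1)) / ε) = 1 ∧
      s = ε * ∑ ℓ ∈ I, du ℓ * ((v ℓ - v (ℓ - 1)) / ε)} with hSset
  -- mean zero of du
  have hmean_u : ∑ ℓ ∈ I, du ℓ = 0 := by
    have hI2 : I = Finset.Icc ((-(N:ℤ)) + 1) ((-(N:ℤ)) + (2 * N : ℕ)) := by
      rw [hIdef]; congr 1; push_cast; ring
    have := telescope u (-(N:ℤ)) (2 * N)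
    have huN : u (N : ℤ) = 0 := hu _ (by simp)
    have humN : u (-(N : ℤ)) = 0 := hu _ (by simp)
    have hcast : (-(N:ℤ)) + ((2 * N : ℕ) : ℤ) = (N : ℤ) := by push_cast; ring
    calc ∑ ℓ ∈ I, du ℓ = (∑ ℓ ∈ I, (u ℓ - u (ℓ - 1))) / ε := by
          rw [Finset.sum_div]
      _ = (u ((-(N:ℤ)) + (2 * N : ℕ)) - u (-(N:ℤ))) / ε := by rw [hI2, this]
      _ = 0 := by rw [hcast, huN, humN]; simp
  -- every element of the set is ≤ np du
  have hub : ∀ s ∈ Sset, s ≤ np du := by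
    rintro s ⟨v, hv, hvn, rfl⟩
    calc ε * ∑ ℓ ∈ I, du ℓ * ((v ℓ - v (ℓ - 1)) / ε)
        ≤ np du * nq (fun ℓ => (v ℓ - v (ℓ - 1)) / ε) := hol du _
      _ = np du * 1 := by rw [hvn]
      _ = np du := mul_one _
  -- building an element of the set from a mean-zero τ with nq τ = 1
  have build : ∀ τ : ℤ → ℝ, (∑ ℓ ∈ I, τ ℓ = 0) → nq τ = 1 →
      (ε * ∑ ℓ ∈ I, du ℓ * τ ℓ) ∈ Sset := by
    intro τ hm h1
    set tz : ℤ → ℝ := fun ℓ => if ℓ ∈ I then τ ℓ else 0 with htz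
    set v : ℤ → ℝ := fun j => ε * ∑ ℓ ∈ Finset.Icc (-(N : ℤ) + 1) j, tz ℓ with hv
    have hdiff : ∀ j : ℤ, (v j - v (j - 1)) / ε = tz j := by
      intro j
      rcases le_or_gt (-(N : ℤ) + 1) j with hj | hj
      · have hins : Finset.Icc (-(N : ℤ) + 1) j =
            insert j (Finset.Icc (-(N : ℤ) + 1) (j - 1)) := by
          ext x; simp only [Finset.mem_Icc, Finset.mem_insert]; omega
        have hnot : j ∉ Finset.Icc (-(N : ℤ) + 1) (j - 1) := by
          simp only [Finset.mem_Icc]; omega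
        simp only [hv]
        rw [hins, Finset.sum_insert hnot]
        field_simp
        ring
      · have h1e : Finset.Icc (-(N : ℤ) + 1) j = ∅ := Finset.Icc_eq_empty (by omega)
        have h2e : Finset.Icc (-(N : ℤ) + 1) (j - 1) = ∅ := Finset.Icc_eq_empty (by omega)
        have hz : tz j = 0 :=
          if_neg (by simp only [hIdef, Finset.mem_Icc]; omega)
        simp only [hv]
        rw [h1e, h2e, hz]
        simp
    refine ⟨v, ?_, ?_, ?_⟩
    · intro j hj
      rcases le_abs.mp hj with hj' | hj'
      · -- N ≤ j
        simp only [hv]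
        have hsub : I ⊆ Finset.Icc (-(N : ℤ) + 1) j := by
          rw [hIdef]; exact Finset.Icc_subset_Icc_right hj'
        have : ∑ ℓ ∈ Finset.Icc (-(N : ℤ) + 1) j, tz ℓ = ∑ ℓ ∈ I, tz ℓ := by
          refine (Finset.sum_subset hsub ?_).symm
          intro x _ hx; exact if_neg hx
        rw [this]
        have : ∑ ℓ ∈ I, tz ℓ = ∑ ℓ ∈ I, τ ℓ :=
          Finset.sum_congr rfl fun x hx => if_pos hx
        rw [this, hm, mul_zero]
      · -- N ≤ -j
        simp only [hv]
        have : Finset.Icc (-(N : ℤ) + 1) j = ∅ := Finset.Icc_eq_empty (by omega)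
        rw [this]; simp
    · have hfun : (fun ℓ => (v ℓ - v (ℓ - 1)) / ε) = tz := funext hdiff
      rw [hfun, congrq tz τ (fun ℓ hℓ => if_pos hℓ), h1]
    · congr 1
      refine Finset.sum_congr rfl fun ℓ hℓ => ?_
      rw [hdiff ℓ]
      exact congrArg _ (if_pos hℓ).symm
  -- a mean-zero τ₀ with nq τ₀ = 1, for nonemptiness
  have habmem : (-(N:ℤ)+1) ∈ I ∧ (N:ℤ) ∈ I := by
    constructor <;> (simp only [hIdef, Finset.mem_Icc]; omega)
  have hab : (-(N:ℤ)+1) ≠ (N:ℤ) := by omega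
  obtain ⟨τ0, hτ0mean, hτ0⟩ :
      ∃ τ0 : ℤ → ℝ, (∑ ℓ ∈ I, τ0 ℓ = 0) ∧ nq τ0 = 1 := by
    set σ0 : ℤ → ℝ := fun ℓ => if ℓ = (-(N:ℤ)+1) then 1 else if ℓ = (N:ℤ) then -1 else 0
      with hσ0
    have hsum0 : ∑ ℓ ∈ I, σ0 ℓ = 0 := by
      have : ∀ ℓ, σ0 ℓ = (if ℓ = (-(N:ℤ)+1) then (1:ℝ) else 0)
          + (if ℓ = (N:ℤ) then (-1:ℝ) else 0) := by
        intro ℓ; simp only [hσ0]; split_ifs with h1 h2 <;> first | (exfalso; omega) | norm_num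
      rw [Finset.sum_congr rfl fun ℓ _ => this ℓ, Finset.sum_add_distrib,
        Finset.sum_ite_eq' I _ (fun _ => (1:ℝ)), Finset.sum_ite_eq' I _ (fun _ => (-1:ℝ)),
        if_pos habmem.1, if_pos habmem.2]
      ring
    have hsq : ∑ ℓ ∈ I, σ0 ℓ * σ0 ℓ = 2 := by
      have : ∀ ℓ, σ0 ℓ * σ0 ℓ = (if ℓ = (-(N:ℤ)+1) then (1:ℝ) else 0)
          + (if ℓ = (N:ℤ) then (1:ℝ) else 0) := by
        intro ℓ; simp only [hσ0]; split_ifs with h1 h2 <;> first | (exfalso; omega) | norm_num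
      rw [Finset.sum_congr rfl fun ℓ _ => this ℓ, Finset.sum_add_distrib,
        Finset.sum_ite_eq' I _ (fun _ => (1:ℝ)), Finset.sum_ite_eq' I _ (fun _ => (1:ℝ)),
        if_pos habmem.1, if_pos habmem.2]
      ring
    have hqpos : 0 < nq σ0 := by
      have h2 : ε * 2 ≤ np σ0 * nq σ0 := by
        have := hol σ0 σ0; rw [hsq] at this; exact this
      rcases lt_or_eq_of_le (nq0 σ0) with h | h
      · exact h
      · exfalso; rw [← h, mul_zero] at h2; nlinarith
    refine ⟨fun ℓ => σ0 ℓ / nq σ0, ?_, hom σ0 (nq σ0) hqpos rfl⟩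
    rw [← Finset.sum_div, hsum0, zero_div]
  have hmem0 := build τ0 hτ0mean hτ0
  have hne : Sset.Nonempty := ⟨_, hmem0⟩
  have hbdd : BddAbove Sset := ⟨np du, fun s hs => hub s hs⟩
  have hSval : S = sSup Sset := hS
  have hSle : S ≤ np du := by rw [hSval]; exact csSup_le hne hub
  refine ⟨hSle, ?_⟩
  by_cases hdupos : 0 < np du
  · obtain ⟨τ, hτ1, hτ2⟩ := att du hdupos
    set c : ℝ := ε * (∑ ℓ ∈ I, τ ℓ) / 2 with hc
    set σ' : ℤ → ℝ := fun ℓ => τ ℓ - c with hσ'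
    have hcard : (I.card : ℝ) = 2 * N := by rw [hIdef, Icc_card]; push_cast; ring
    have hmean' : ∑ ℓ ∈ I, σ' ℓ = 0 := by
      rw [hσ']
      rw [Finset.sum_sub_distrib, Finset.sum_const, nsmul_eq_mul]
      rw [hIdef] at hcard ⊢
      rw [hcard, hc, hε]
      field_simp
      ring
    have hpair' : ε * ∑ ℓ ∈ I, du ℓ * σ' ℓ = np du := by
      have : ∑ ℓ ∈ I, du ℓ * σ' ℓ = ∑ ℓ ∈ I, du ℓ * τ ℓ - c * ∑ ℓ ∈ I, du ℓ := by
        rw [Finset.mul_sum, ← Finset.sum_sub_distrib]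
        exact Finset.sum_congr rfl fun ℓ _ => by rw [hσ']; ring
      rw [this, hmean_u, mul_zero, sub_zero, hτ2]
    -- |c| * nq 1 ≤ 1
    have habs : |ε * ∑ ℓ ∈ I, τ ℓ| ≤ np (fun _ => 1) := by
      rw [abs_le]
      constructor
      · have := hol (fun _ => (-1:ℝ)) τ
        have hnp : np (fun _ => (-1:ℝ)) = np (fun _ => (1:ℝ)) := npneg (fun _ => 1)
        rw [hnp, hτ1, mul_one] at this
        have hsum : ∑ ℓ ∈ I, (-1:ℝ) * τ ℓ = -∑ ℓ ∈ I, τ ℓ := by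
          rw [← Finset.sum_neg_distrib]; exact Finset.sum_congr rfl fun ℓ _ => by ring
        rw [hsum] at this
        linarith
      · have := hol (fun _ => (1:ℝ)) τ
        rw [hτ1, mul_one] at this
        have hsum : ∑ ℓ ∈ I, (1:ℝ) * τ ℓ = ∑ ℓ ∈ I, τ ℓ := by
          exact Finset.sum_congr rfl fun ℓ _ => by ring
        rw [hsum] at this
        linarith
    have hcbound : |c| * nq (fun _ => 1) ≤ 1 := by
      have h1 : |c| ≤ np (fun _ => 1) / 2 := by
        rw [hc, abs_div]
        have : |(2:ℝ)| = 2 := by norm_num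
        rw [this]
        linarith [habs]
      calc |c| * nq (fun _ => 1) ≤ (np (fun _ => 1) / 2) * nq (fun _ => 1) :=
            mul_le_mul_of_nonneg_right h1 (nq0 _)
        _ = np (fun _ => 1) * nq (fun _ => 1) / 2 := by ring
        _ ≤ 2 / 2 := by linarith [one2]
        _ = 1 := by norm_num
    have hA2 : nq σ' ≤ 2 := by
      have := tri τ c
      rw [hτ1] at this
      calc nq σ' ≤ 1 + |c| * nq (fun _ => 1) := this
        _ ≤ 1 + 1 := by linarith [hcbound]
        _ = 2 := by norm_num
    have hA0 : 0 < nq σ' := by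
      by_contra h
      push_neg at h
      have h2 := hol du σ'
      rw [hpair'] at h2
      have h3 : np du * nq σ' ≤ 0 := mul_nonpos_of_nonneg_of_nonpos (np0 du) h
      linarith
    have hτ'1 : nq (fun ℓ => σ' ℓ / nq σ') = 1 := hom σ' (nq σ') hA0 rfl
    have hτ'mean : ∑ ℓ ∈ I, σ' ℓ / nq σ' = 0 := by
      rw [← Finset.sum_div, hmean', zero_div]
    have hmem := build (fun ℓ => σ' ℓ / nq σ') hτ'mean hτ'1
    have hs0 : ε * ∑ ℓ ∈ I, du ℓ * (σ' ℓ / nq σ') = np du / nq σ' := by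
      rw [← hpair']
      rw [Finset.mul_sum, Finset.mul_sum, Finset.sum_div]
      exact Finset.sum_congr rfl fun ℓ _ => by ring
    have hSge : np du / nq σ' ≤ S := by
      rw [hSval]
      rw [hs0] at hmem
      exact le_csSup hbdd hmem
    have : np du / 2 ≤ np du / nq σ' :=
      div_le_div_of_nonneg_left hdupos.le hA0 hA2
    linarith
  · push_neg at hdupos
    have h0 : np du = 0 := le_antisymm hdupos (np0 du)
    have hs0pos : 0 ≤ ε * ∑ ℓ ∈ I, du ℓ * τ0 ℓ := by
      have := hol (fun ℓ => -du ℓ) τ0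
      rw [npneg du, h0, hτ0, zero_mul] at this
      have hsum : ∑ ℓ ∈ I, (-du ℓ) * τ0 ℓ = -∑ ℓ ∈ I, du ℓ * τ0 ℓ := by
        rw [← Finset.sum_neg_distrib]; exact Finset.sum_congr rfl fun ℓ _ => by ring
      rw [hsum] at this
      nlinarith
    have hSge : ε * ∑ ℓ ∈ I, du ℓ * τ0 ℓ ≤ S := by
      rw [hSval]; exact le_csSup hbdd hmem0
    linarith

private lemma wnorm (N : ℕ) {ε : ℝ} (hεpos : 0 < ε) {r : ℝ} (hr : 0 < r) (σ : ℤ → ℝ) :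
    (ε * ∑ ℓ ∈ Finset.Icc (-(N:ℤ)+1) (N:ℤ), |σ ℓ| ^ r) ^ (1/r)
      = (∑ ℓ ∈ Finset.Icc (-(N:ℤ)+1) (N:ℤ), |ε ^ (1/r) * σ ℓ| ^ r) ^ (1/r) := by
  congr 1
  rw [Finset.mul_sum]
  refine Finset.sum_congr rfl fun ℓ _ => ?_
  rw [abs_mul, abs_of_nonneg (Real.rpow_nonneg hεpos.le _),
    Real.mul_rpow (Real.rpow_nonneg hεpos.le _) (abs_nonneg _),
    ← Real.rpow_mul hεpos.le, one_div_mul_cancel hr.ne', Real.rpow_one]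

private lemma minkow (N : ℕ) {ε : ℝ} (hεpos : 0 < ε) {r : ℝ} (hr : 1 ≤ r) (σ τ : ℤ → ℝ) :
    (ε * ∑ ℓ ∈ Finset.Icc (-(N:ℤ)+1) (N:ℤ), |σ ℓ + τ ℓ| ^ r) ^ (1/r)
      ≤ (ε * ∑ ℓ ∈ Finset.Icc (-(N:ℤ)+1) (N:ℤ), |σ ℓ| ^ r) ^ (1/r)
        + (ε * ∑ ℓ ∈ Finset.Icc (-(N:ℤ)+1) (N:ℤ), |τ ℓ| ^ r) ^ (1/r) := by
  have hr0 : (0:ℝ) < r := lt_of_lt_of_le one_pos hr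
  rw [wnorm N hεpos hr0, wnorm N hεpos hr0, wnorm N hεpos hr0]
  have h := Real.Lp_add_le (Finset.Icc (-(N:ℤ)+1) (N:ℤ))
    (fun ℓ => ε ^ (1/r) * σ ℓ) (fun ℓ => ε ^ (1/r) * τ ℓ) hr
  refine le_trans (le_of_eq ?_) h
  congr 1
  refine Finset.sum_congr rfl fun ℓ _ => ?_
  rw [mul_add]

private lemma normF_const (N : ℕ) {ε : ℝ} (hεpos : 0 < ε) {r : ℝ} (hr : 0 < r) (d : ℝ) :
    (ε * ∑ ℓ ∈ Finset.Icc (-(N:ℤ)+1) (N:ℤ), |(fun _ : ℤ => d) ℓ| ^ r) ^ (1/r)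
      = |d| * (ε * ∑ ℓ ∈ Finset.Icc (-(N:ℤ)+1) (N:ℤ), |(1:ℝ)| ^ r) ^ (1/r) := by
  have h1 : ∀ x : ℤ, |d| ^ r = |d| ^ r * |(1:ℝ)| ^ r := by
    intro x; rw [abs_one, Real.one_rpow, mul_one]
  simp only []
  have h2 : ε * ∑ ℓ ∈ Finset.Icc (-(N:ℤ)+1) (N:ℤ), |d| ^ r
      = |d| ^ r * (ε * ∑ ℓ ∈ Finset.Icc (-(N:ℤ)+1) (N:ℤ), |(1:ℝ)| ^ r) := by
    rw [Finset.mul_sum, Finset.mul_sum, Finset.mul_sum]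
    refine Finset.sum_congr rfl fun ℓ _ => ?_
    rw [abs_one, Real.one_rpow]; ring
  rw [h2, Real.mul_rpow (Real.rpow_nonneg (abs_nonneg _) _) (by positivity),
    ← Real.rpow_mul (abs_nonneg _), mul_one_div_cancel hr.ne', Real.rpow_one]

private lemma normF_one (N : ℕ) (hN : 2 ≤ N) {ε : ℝ} (hε : ε = 1 / N) {r : ℝ} :
    (ε * ∑ ℓ ∈ Finset.Icc (-(N:ℤ)+1) (N:ℤ), |(1:ℝ)| ^ r) ^ (1/r) = 2 ^ (1/r) := by
  have hNpos : (0:ℝ) < N := by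
    have : (2:ℝ) ≤ N := by exact_mod_cast hN
    linarith
  congr 1
  simp only [abs_one, Real.one_rpow, Finset.sum_const, Icc_card N, nsmul_eq_mul, hε]
  push_cast
  field_simp

private lemma normF_hom (N : ℕ) {ε : ℝ} (hεpos : 0 < ε) {r : ℝ} (hr : 0 < r)
    {A : ℝ} (hA : 0 < A) (σ : ℤ → ℝ) :
    (ε * ∑ ℓ ∈ Finset.Icc (-(N:ℤ)+1) (N:ℤ), |σ ℓ / A| ^ r) ^ (1/r)
      = (ε * ∑ ℓ ∈ Finset.Icc (-(N:ℤ)+1) (N:ℤ), |σ ℓ| ^ r) ^ (1/r) / A := by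
  have h1 : ε * ∑ ℓ ∈ Finset.Icc (-(N:ℤ)+1) (N:ℤ), |σ ℓ / A| ^ r
      = (ε * ∑ ℓ ∈ Finset.Icc (-(N:ℤ)+1) (N:ℤ), |σ ℓ| ^ r) / A ^ r := by
    have hpt : ∀ ℓ : ℤ, |σ ℓ / A| ^ r = |σ ℓ| ^ r / A ^ r := fun ℓ => by
      rw [abs_div, abs_of_pos hA, Real.div_rpow (abs_nonneg _) hA.le]
    rw [Finset.sum_congr rfl fun ℓ _ => hpt ℓ, ← Finset.sum_div, ← mul_div_assoc]
  rw [h1, Real.div_rpow (by positivity) (by positivity), ← Real.rpow_mul hA.le,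
    mul_one_div_cancel hr.ne', Real.rpow_one]

private lemma holC (N : ℕ) {ε : ℝ} (hεpos : 0 < ε) {pr qr : ℝ}
    (hc : pr.HolderConjugate qr) (σ τ : ℤ → ℝ) :
    ε * ∑ ℓ ∈ Finset.Icc (-(N:ℤ)+1) (N:ℤ), σ ℓ * τ ℓ
      ≤ (ε * ∑ ℓ ∈ Finset.Icc (-(N:ℤ)+1) (N:ℤ), |σ ℓ| ^ pr) ^ (1/pr)
        * (ε * ∑ ℓ ∈ Finset.Icc (-(N:ℤ)+1) (N:ℤ), |τ ℓ| ^ qr) ^ (1/qr) := by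
  rw [wnorm N hεpos hc.pos, wnorm N hεpos hc.symm.pos]
  have h := Real.inner_le_Lp_mul_Lq (Finset.Icc (-(N:ℤ)+1) (N:ℤ))
    (fun ℓ => ε ^ (1/pr) * σ ℓ) (fun ℓ => ε ^ (1/qr) * τ ℓ) hc
  refine le_trans (le_of_eq ?_) h
  have hεε : ε ^ (1/pr) * ε ^ (1/qr) = ε := by
    rw [← Real.rpow_add hεpos, one_div, one_div, hc.inv_add_inv_eq_one, Real.rpow_one]
  rw [Finset.mul_sum]
  refine Finset.sum_congr rfl fun ℓ _ => ?_
  calc ε * (σ ℓ * τ ℓ) = (ε ^ (1/pr) * ε ^ (1/qr)) * (σ ℓ * τ ℓ) := by rw [hεε]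
    _ = ε ^ (1/pr) * σ ℓ * (ε ^ (1/qr) * τ ℓ) := by ring

private lemma attC (N : ℕ) {ε : ℝ} (hεpos : 0 < ε) {pr qr : ℝ}
    (hc : pr.HolderConjugate qr) (σ : ℤ → ℝ)
    (hσ : 0 < (ε * ∑ ℓ ∈ Finset.Icc (-(N:ℤ)+1) (N:ℤ), |σ ℓ| ^ pr) ^ (1/pr)) :
    ∃ τ : ℤ → ℝ,
      (ε * ∑ ℓ ∈ Finset.Icc (-(N:ℤ)+1) (N:ℤ), |τ ℓ| ^ qr) ^ (1/qr) = 1 ∧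
      ε * ∑ ℓ ∈ Finset.Icc (-(N:ℤ)+1) (N:ℤ), σ ℓ * τ ℓ
        = (ε * ∑ ℓ ∈ Finset.Icc (-(N:ℤ)+1) (N:ℤ), |σ ℓ| ^ pr) ^ (1/pr) := by
  set T : ℝ := ε * ∑ ℓ ∈ Finset.Icc (-(N:ℤ)+1) (N:ℤ), |σ ℓ| ^ pr with hT
  have hT0 : 0 ≤ T := by
    rw [hT]; positivity
  have hTpos : 0 < T := by
    rcases lt_or_eq_of_le hT0 with h | h
    · exact h
    · exfalso
      rw [← h, Real.zero_rpow (one_div_ne_zero hc.ne_zero)] at hσ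
      exact lt_irrefl 0 hσ
  refine ⟨fun ℓ => (if σ ℓ < 0 then -1 else 1) * |σ ℓ| ^ (pr - 1) / T ^ (1/qr), ?_, ?_⟩
  · have habs : ∀ ℓ : ℤ,
        |(if σ ℓ < 0 then (-1:ℝ) else 1) * |σ ℓ| ^ (pr-1) / T ^ (1/qr)| ^ qr
          = |σ ℓ| ^ pr / T := by
      intro ℓ
      have h1 : |(if σ ℓ < 0 then (-1:ℝ) else 1)| = 1 := by split_ifs <;> simp
      rw [abs_div, abs_mul, h1, one_mul,
        abs_of_nonneg (Real.rpow_nonneg (abs_nonneg _) _),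
        abs_of_nonneg (Real.rpow_nonneg hT0 _),
        Real.div_rpow (Real.rpow_nonneg (abs_nonneg _) _) (Real.rpow_nonneg hT0 _),
        ← Real.rpow_mul (abs_nonneg _), hc.sub_one_mul_conj,
        one_div, Real.rpow_inv_rpow hT0 hc.symm.ne_zero]
    calc (ε * ∑ ℓ ∈ Finset.Icc (-(N:ℤ)+1) (N:ℤ),
            |(if σ ℓ < 0 then (-1:ℝ) else 1) * |σ ℓ| ^ (pr-1) / T ^ (1/qr)| ^ qr) ^ (1/qr)
        = (ε * ∑ ℓ ∈ Finset.Icc (-(N:ℤ)+1) (N:ℤ), |σ ℓ| ^ pr / T) ^ (1/qr) := by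
          congr 1
          exact congrArg _ (Finset.sum_congr rfl fun ℓ _ => habs ℓ)
      _ = (T / T) ^ (1/qr) := by rw [← Finset.sum_div, ← mul_div_assoc, ← hT]
      _ = 1 := by rw [div_self hTpos.ne', Real.one_rpow]
  · have hterm : ∀ ℓ : ℤ,
        σ ℓ * ((if σ ℓ < 0 then (-1:ℝ) else 1) * |σ ℓ| ^ (pr-1) / T ^ (1/qr))
          = |σ ℓ| ^ pr / T ^ (1/qr) := by
      intro ℓ
      rcases lt_trichotomy (σ ℓ) 0 with h | h | h
      · have key : |σ ℓ| * |σ ℓ| ^ (pr-1) = |σ ℓ| ^ pr := by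
          have h3 := Real.rpow_add (abs_pos.2 h.ne) 1 (pr-1)
          rw [Real.rpow_one] at h3
          have h2 : (1:ℝ) + (pr - 1) = pr := by ring
          rw [h2] at h3
          exact h3.symm
        rw [if_pos h]
        calc σ ℓ * (-1 * |σ ℓ| ^ (pr-1) / T ^ (1/qr))
            = ((-σ ℓ) * |σ ℓ| ^ (pr-1)) / T ^ (1/qr) := by ring
          _ = (|σ ℓ| * |σ ℓ| ^ (pr-1)) / T ^ (1/qr) := by rw [abs_of_neg h]
          _ = |σ ℓ| ^ pr / T ^ (1/qr) := by rw [key]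
      · rw [h]
        simp [Real.zero_rpow hc.ne_zero]
      · have key : |σ ℓ| * |σ ℓ| ^ (pr-1) = |σ ℓ| ^ pr := by
          have h3 := Real.rpow_add (abs_pos.2 h.ne') 1 (pr-1)
          rw [Real.rpow_one] at h3
          have h2 : (1:ℝ) + (pr - 1) = pr := by ring
          rw [h2] at h3
          exact h3.symm
        rw [if_neg (not_lt.2 h.le)]
        calc σ ℓ * (1 * |σ ℓ| ^ (pr-1) / T ^ (1/qr))
            = (σ ℓ * |σ ℓ| ^ (pr-1)) / T ^ (1/qr) := by ring
          _ = (|σ ℓ| * |σ ℓ| ^ (pr-1)) / T ^ (1/qr) := by rw [abs_of_pos h]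
          _ = |σ ℓ| ^ pr / T ^ (1/qr) := by rw [key]
    have hfin : T ^ ((1:ℝ)/pr) = T / T ^ ((1:ℝ)/qr) := by
      rw [eq_div_iff (ne_of_gt (Real.rpow_pos_of_pos hTpos _)),
        ← Real.rpow_add hTpos, one_div, one_div, hc.inv_add_inv_eq_one, Real.rpow_one]
    calc ε * ∑ ℓ ∈ Finset.Icc (-(N:ℤ)+1) (N:ℤ),
          σ ℓ * ((if σ ℓ < 0 then (-1:ℝ) else 1) * |σ ℓ| ^ (pr-1) / T ^ (1/qr))
        = ε * ∑ ℓ ∈ Finset.Icc (-(N:ℤ)+1) (N:ℤ), |σ ℓ| ^ pr / T ^ (1/qr) := by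
          exact congrArg _ (Finset.sum_congr rfl fun ℓ _ => hterm ℓ)
      _ = T / T ^ ((1:ℝ)/qr) := by rw [← Finset.sum_div, ← mul_div_assoc, ← hT]
      _ = T ^ ((1:ℝ)/pr) := hfin.symm

private lemma lp_sup_div (N : ℕ) (hN : 2 ≤ N) (f : ℤ → ℝ) {A : ℝ} (hA : 0 < A) :
    ((Finset.Icc (-(N:ℤ)+1) (N:ℤ)).sup' (Icc_ne N hN) fun ℓ => f ℓ / A)
      = ((Finset.Icc (-(N:ℤ)+1) (N:ℤ)).sup' (Icc_ne N hN) f) / A :=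
  (Finset.comp_sup'_eq_sup'_comp (Icc_ne N hN) (fun x : ℝ => x / A)
    (fun x y => (max_div_div_right hA.le x y).symm)).symm

private lemma lpnorm_ne_top (N : ℕ) (ε : ℝ) {p : ℝ≥0∞} (hp : p ≠ ⊤) (σ : ℤ → ℝ) :
    lpnorm N ε p σ = (ε * ∑ ℓ ∈ Finset.Icc (-(N:ℤ)+1) (N:ℤ), |σ ℓ| ^ p.toReal)
      ^ (1 / p.toReal) := by
  rw [lpnorm, if_neg hp]

private lemma caseA (N : ℕ) (hN : 2 ≤ N) (ε : ℝ) (hε : ε = 1 / N)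
    (u : ℤ → ℝ) (hu : ∀ j : ℤ, (N : ℤ) ≤ |j| → u j = 0)
    (S : ℝ)
    (hS : S = sSup {s : ℝ | ∃ v : ℤ → ℝ,
      (∀ j : ℤ, (N : ℤ) ≤ |j| → v j = 0) ∧
      lpnorm N ε 1 (fun ℓ => (v ℓ - v (ℓ - 1)) / ε) = 1 ∧
      s = ε * ∑ ℓ ∈ Finset.Icc (-(N : ℤ) + 1) (N : ℤ),
        ((u ℓ - u (ℓ - 1)) / ε) * ((v ℓ - v (ℓ - 1)) / ε)}) :
    S ≤ lpnorm N ε ⊤ (fun ℓ => (u ℓ - u (ℓ - 1)) / ε) ∧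
    lpnorm N ε ⊤ (fun ℓ => (u ℓ - u (ℓ - 1)) / ε) ≤ 2 * S := by
  have hNpos : (0:ℝ) < N := by
    have : (2:ℝ) ≤ N := by exact_mod_cast hN
    linarith
  have hεpos : 0 < ε := by rw [hε]; positivity
  have hcard : ((Finset.Icc (-(N:ℤ)+1) (N:ℤ)).card : ℝ) = 2 * N := by
    rw [Icc_card]; push_cast; ring
  refine key N hN ε hε (lpnorm N ε ⊤) (lpnorm N ε 1) ?_ ?_ ?_ ?_ ?_ ?_ ?_ ?_ ?_ u hu S hS
  · -- np0
    intro σ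
    rw [lpnorm_top N hN]
    obtain ⟨a, ha⟩ := Icc_ne N hN
    exact le_trans (abs_nonneg (σ a)) (Finset.le_sup' (fun ℓ => |σ ℓ|) ha)
  · -- nq0
    intro σ
    rw [lpnorm_one]
    positivity
  · -- npneg
    intro σ
    rw [lpnorm_top N hN, lpnorm_top N hN]
    exact Finset.sup'_congr _ rfl fun ℓ _ => abs_neg (σ ℓ)
  · -- hol
    intro σ τ
    rw [lpnorm_top N hN, lpnorm_one]
    set M := (Finset.Icc (-(N:ℤ)+1) (N:ℤ)).sup' (Icc_ne N hN) (fun ℓ => |σ ℓ|) with hM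
    have h1 : ∀ ℓ ∈ Finset.Icc (-(N:ℤ)+1) (N:ℤ), σ ℓ * τ ℓ ≤ M * |τ ℓ| := by
      intro ℓ hℓ
      calc σ ℓ * τ ℓ ≤ |σ ℓ * τ ℓ| := le_abs_self _
        _ = |σ ℓ| * |τ ℓ| := abs_mul _ _
        _ ≤ M * |τ ℓ| :=
          mul_le_mul_of_nonneg_right (Finset.le_sup' (fun ℓ => |σ ℓ|) hℓ) (abs_nonneg _)
    calc ε * ∑ ℓ ∈ Finset.Icc (-(N:ℤ)+1) (N:ℤ), σ ℓ * τ ℓ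
        ≤ ε * ∑ ℓ ∈ Finset.Icc (-(N:ℤ)+1) (N:ℤ), M * |τ ℓ| :=
          mul_le_mul_of_nonneg_left (Finset.sum_le_sum h1) hεpos.le
      _ = ε * (M * ∑ ℓ ∈ Finset.Icc (-(N:ℤ)+1) (N:ℤ), |τ ℓ|) := by
          rw [← Finset.mul_sum]
      _ = M * (ε * ∑ ℓ ∈ Finset.Icc (-(N:ℤ)+1) (N:ℤ), |τ ℓ|) := by ring
  · -- att
    intro σ hσ
    rw [lpnorm_top N hN] at hσ ⊢
    obtain ⟨ℓ0, hℓ0, hMs⟩ := Finset.exists_mem_eq_sup' (Icc_ne N hN) (fun ℓ => |σ ℓ|)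
    refine ⟨fun ℓ => if ℓ = ℓ0 then (if σ ℓ0 < 0 then -1 else 1)/ε else 0, ?_, ?_⟩
    · rw [lpnorm_one]
      have h1 : ∀ ℓ : ℤ, |if ℓ = ℓ0 then (if σ ℓ0 < 0 then (-1:ℝ) else 1)/ε else 0|
          = if ℓ = ℓ0 then 1/ε else 0 := by
        intro ℓ
        by_cases h1 : ℓ = ℓ0
        · rw [if_pos h1, if_pos h1]
          split_ifs with h2 <;> rw [abs_div] <;> simp [abs_of_pos hεpos]
        · rw [if_neg h1, if_neg h1, abs_zero]
      rw [Finset.sum_congr rfl fun ℓ _ => h1 ℓ,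
        Finset.sum_ite_eq' _ ℓ0 (fun _ => 1/ε), if_pos hℓ0]
      field_simp
    · have h2 : ∀ ℓ : ℤ, σ ℓ * (if ℓ = ℓ0 then (if σ ℓ0 < 0 then (-1:ℝ) else 1)/ε else 0)
          = if ℓ = ℓ0 then |σ ℓ0|/ε else 0 := by
        intro ℓ
        by_cases h1 : ℓ = ℓ0
        · subst h1
          rw [if_pos rfl, if_pos rfl]
          by_cases h2 : σ ℓ < 0
          · rw [if_pos h2, abs_of_neg h2]; ring
          · rw [if_neg h2, abs_of_nonneg (not_lt.1 h2)]; ring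
        · rw [if_neg h1, if_neg h1, mul_zero]
      rw [Finset.sum_congr rfl fun ℓ _ => h2 ℓ,
        Finset.sum_ite_eq' _ ℓ0 (fun _ => |σ ℓ0|/ε), if_pos hℓ0, hMs]
      field_simp
  · -- tri
    intro τ c
    rw [lpnorm_one, lpnorm_one, lpnorm_one]
    have h1 : ∑ ℓ ∈ Finset.Icc (-(N:ℤ)+1) (N:ℤ), |τ ℓ - c|
        ≤ ∑ ℓ ∈ Finset.Icc (-(N:ℤ)+1) (N:ℤ), |τ ℓ|
          + ((Finset.Icc (-(N:ℤ)+1) (N:ℤ)).card : ℝ) * |c| := by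
      calc ∑ ℓ ∈ Finset.Icc (-(N:ℤ)+1) (N:ℤ), |τ ℓ - c|
          ≤ ∑ ℓ ∈ Finset.Icc (-(N:ℤ)+1) (N:ℤ), (|τ ℓ| + |c|) :=
            Finset.sum_le_sum fun ℓ _ => abs_sub (τ ℓ) c
        _ = _ := by rw [Finset.sum_add_distrib, Finset.sum_const, nsmul_eq_mul]
    have h2 : ∑ ℓ ∈ Finset.Icc (-(N:ℤ)+1) (N:ℤ), |(1:ℝ)|
        = ((Finset.Icc (-(N:ℤ)+1) (N:ℤ)).card : ℝ) := by
      simp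
    rw [h2]
    have h3 := mul_le_mul_of_nonneg_left h1 hεpos.le
    calc ε * ∑ ℓ ∈ Finset.Icc (-(N:ℤ)+1) (N:ℤ), |τ ℓ - c|
        ≤ ε * (∑ ℓ ∈ Finset.Icc (-(N:ℤ)+1) (N:ℤ), |τ ℓ|
            + ((Finset.Icc (-(N:ℤ)+1) (N:ℤ)).card : ℝ) * |c|) := h3
      _ = ε * ∑ ℓ ∈ Finset.Icc (-(N:ℤ)+1) (N:ℤ), |τ ℓ|
            + |c| * (ε * ((Finset.Icc (-(N:ℤ)+1) (N:ℤ)).card : ℝ)) := by ring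
  · -- hom
    intro τ A hA hτ
    rw [lpnorm_one] at hτ ⊢
    have h1 : ∀ ℓ : ℤ, |τ ℓ / A| = |τ ℓ| / A := fun ℓ => by
      rw [abs_div, abs_of_pos hA]
    rw [Finset.sum_congr rfl fun ℓ _ => h1 ℓ, ← Finset.sum_div, ← mul_div_assoc, hτ,
      div_self hA.ne']
  · -- congrq
    intro τ τ' h
    rw [lpnorm_one, lpnorm_one]
    congr 1
    exact Finset.sum_congr rfl fun ℓ hℓ => by rw [h ℓ hℓ]
  · -- one2
    rw [lpnorm_top N hN, lpnorm_one]
    have h1 : ((Finset.Icc (-(N:ℤ)+1) (N:ℤ)).sup' (Icc_ne N hN)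
        (fun ℓ => |(fun _ : ℤ => (1:ℝ)) ℓ|)) = 1 := by
      simp
    have h2 : ε * ∑ ℓ ∈ Finset.Icc (-(N:ℤ)+1) (N:ℤ), |(1:ℝ)| = 2 := by
      rw [abs_one, Finset.sum_const, nsmul_eq_mul, mul_one, hcard, hε]
      field_simp
      try ring
    rw [h1, h2]
    norm_num

private lemma caseB (N : ℕ) (hN : 2 ≤ N) (ε : ℝ) (hε : ε = 1 / N)
    (u : ℤ → ℝ) (hu : ∀ j : ℤ, (N : ℤ) ≤ |j| → u j = 0)
    (S : ℝ)
    (hS : S = sSup {s : ℝ | ∃ v : ℤ → ℝ,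
      (∀ j : ℤ, (N : ℤ) ≤ |j| → v j = 0) ∧
      lpnorm N ε ⊤ (fun ℓ => (v ℓ - v (ℓ - 1)) / ε) = 1 ∧
      s = ε * ∑ ℓ ∈ Finset.Icc (-(N : ℤ) + 1) (N : ℤ),
        ((u ℓ - u (ℓ - 1)) / ε) * ((v ℓ - v (ℓ - 1)) / ε)}) :
    S ≤ lpnorm N ε 1 (fun ℓ => (u ℓ - u (ℓ - 1)) / ε) ∧
    lpnorm N ε 1 (fun ℓ => (u ℓ - u (ℓ - 1)) / ε) ≤ 2 * S := by
  have hNpos : (0:ℝ) < N := by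
    have : (2:ℝ) ≤ N := by exact_mod_cast hN
    linarith
  have hεpos : 0 < ε := by rw [hε]; positivity
  have hcard : ((Finset.Icc (-(N:ℤ)+1) (N:ℤ)).card : ℝ) = 2 * N := by
    rw [Icc_card]; push_cast; ring
  have hsup0 : ∀ σ : ℤ → ℝ, 0 ≤ (Finset.Icc (-(N:ℤ)+1) (N:ℤ)).sup' (Icc_ne N hN)
      (fun ℓ => |σ ℓ|) := by
    intro σ
    obtain ⟨a, ha⟩ := Icc_ne N hN
    exact le_trans (abs_nonneg (σ a)) (Finset.le_sup' (fun ℓ => |σ ℓ|) ha)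
  refine key N hN ε hε (lpnorm N ε 1) (lpnorm N ε ⊤) ?_ ?_ ?_ ?_ ?_ ?_ ?_ ?_ ?_ u hu S hS
  · -- np0
    intro σ
    rw [lpnorm_one]
    positivity
  · -- nq0
    intro σ
    rw [lpnorm_top N hN]
    exact hsup0 σ
  · -- npneg
    intro σ
    rw [lpnorm_one, lpnorm_one]
    congr 1
    exact Finset.sum_congr rfl fun ℓ _ => abs_neg (σ ℓ)
  · -- hol
    intro σ τ
    rw [lpnorm_one, lpnorm_top N hN]
    set M := (Finset.Icc (-(N:ℤ)+1) (N:ℤ)).sup' (Icc_ne N hN) (fun ℓ => |τ ℓ|) with hM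
    have h1 : ∀ ℓ ∈ Finset.Icc (-(N:ℤ)+1) (N:ℤ), σ ℓ * τ ℓ ≤ |σ ℓ| * M := by
      intro ℓ hℓ
      calc σ ℓ * τ ℓ ≤ |σ ℓ * τ ℓ| := le_abs_self _
        _ = |σ ℓ| * |τ ℓ| := abs_mul _ _
        _ ≤ |σ ℓ| * M :=
          mul_le_mul_of_nonneg_left (Finset.le_sup' (fun ℓ => |τ ℓ|) hℓ) (abs_nonneg _)
    calc ε * ∑ ℓ ∈ Finset.Icc (-(N:ℤ)+1) (N:ℤ), σ ℓ * τ ℓ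
        ≤ ε * ∑ ℓ ∈ Finset.Icc (-(N:ℤ)+1) (N:ℤ), |σ ℓ| * M :=
          mul_le_mul_of_nonneg_left (Finset.sum_le_sum h1) hεpos.le
      _ = (ε * ∑ ℓ ∈ Finset.Icc (-(N:ℤ)+1) (N:ℤ), |σ ℓ|) * M := by
          rw [← Finset.sum_mul]; ring
  · -- att
    intro σ hσ
    rw [lpnorm_one] at hσ ⊢
    refine ⟨fun ℓ => if σ ℓ < 0 then -1 else 1, ?_, ?_⟩
    · rw [lpnorm_top N hN]
      have h1 : ∀ ℓ ∈ Finset.Icc (-(N:ℤ)+1) (N:ℤ),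
          |(fun ℓ => if σ ℓ < 0 then (-1:ℝ) else 1) ℓ| = (fun _ : ℤ => (1:ℝ)) ℓ := by
        intro ℓ _
        simp only []
        split_ifs <;> norm_num
      rw [Finset.sup'_congr _ rfl h1, Finset.sup'_const]
    · have h2 : ∀ ℓ : ℤ, σ ℓ * (if σ ℓ < 0 then (-1:ℝ) else 1) = |σ ℓ| := by
        intro ℓ
        by_cases h : σ ℓ < 0
        · rw [if_pos h, abs_of_neg h]; ring
        · rw [if_neg h, abs_of_nonneg (not_lt.1 h)]; ring
      rw [Finset.sum_congr rfl fun ℓ _ => h2 ℓ]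
  · -- tri
    intro τ c
    rw [lpnorm_top N hN, lpnorm_top N hN, lpnorm_top N hN]
    have hone : ((Finset.Icc (-(N:ℤ)+1) (N:ℤ)).sup' (Icc_ne N hN)
        (fun ℓ => |(fun _ : ℤ => (1:ℝ)) ℓ|)) = 1 := by simp
    rw [hone, mul_one]
    refine Finset.sup'_le _ _ fun ℓ hℓ => ?_
    calc |τ ℓ - c| ≤ |τ ℓ| + |c| := abs_sub (τ ℓ) c
      _ ≤ (Finset.Icc (-(N:ℤ)+1) (N:ℤ)).sup' (Icc_ne N hN) (fun ℓ => |τ ℓ|) + |c| :=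
        add_le_add (Finset.le_sup' (fun ℓ => |τ ℓ|) hℓ) le_rfl
  · -- hom
    intro τ A hA hτ
    rw [lpnorm_top N hN] at hτ ⊢
    have h1 : ∀ ℓ ∈ Finset.Icc (-(N:ℤ)+1) (N:ℤ),
        |(fun ℓ => τ ℓ / A) ℓ| = (fun ℓ => |τ ℓ| / A) ℓ := by
      intro ℓ _
      simp only []
      rw [abs_div, abs_of_pos hA]
    rw [Finset.sup'_congr _ rfl h1, lp_sup_div N hN _ hA, hτ, div_self hA.ne']
  · -- congrq
    intro τ τ' h
    rw [lpnorm_top N hN, lpnorm_top N hN]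
    exact Finset.sup'_congr _ rfl fun ℓ hℓ => by rw [h ℓ hℓ]
  · -- one2
    rw [lpnorm_one, lpnorm_top N hN]
    have h1 : ((Finset.Icc (-(N:ℤ)+1) (N:ℤ)).sup' (Icc_ne N hN)
        (fun ℓ => |(fun _ : ℤ => (1:ℝ)) ℓ|)) = 1 := by simp
    have h2 : ε * ∑ ℓ ∈ Finset.Icc (-(N:ℤ)+1) (N:ℤ), |(1:ℝ)| = 2 := by
      rw [abs_one, Finset.sum_const, nsmul_eq_mul, mul_one, hcard, hε]
      field_simp
      try ring
    rw [h1, h2]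
    norm_num

private lemma caseC (N : ℕ) (hN : 2 ≤ N) (ε : ℝ) (hε : ε = 1 / N)
    (p q : ℝ≥0∞) (hpt : p ≠ ⊤) (hqt : q ≠ ⊤)
    (hc : Real.HolderConjugate p.toReal q.toReal)
    (u : ℤ → ℝ) (hu : ∀ j : ℤ, (N : ℤ) ≤ |j| → u j = 0)
    (S : ℝ)
    (hS : S = sSup {s : ℝ | ∃ v : ℤ → ℝ,
      (∀ j : ℤ, (N : ℤ) ≤ |j| → v j = 0) ∧
      lpnorm N ε q (fun ℓ => (v ℓ - v (ℓ - 1)) / ε) = 1 ∧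
      s = ε * ∑ ℓ ∈ Finset.Icc (-(N : ℤ) + 1) (N : ℤ),
        ((u ℓ - u (ℓ - 1)) / ε) * ((v ℓ - v (ℓ - 1)) / ε)}) :
    S ≤ lpnorm N ε p (fun ℓ => (u ℓ - u (ℓ - 1)) / ε) ∧
    lpnorm N ε p (fun ℓ => (u ℓ - u (ℓ - 1)) / ε) ≤ 2 * S := by
  have hNpos : (0:ℝ) < N := by
    have : (2:ℝ) ≤ N := by exact_mod_cast hN
    linarith
  have hεpos : 0 < ε := by rw [hε]; positivity
  refine key N hN ε hε (lpnorm N ε p) (lpnorm N ε q) ?_ ?_ ?_ ?_ ?_ ?_ ?_ ?_ ?_ u hu S hS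
  · -- np0
    intro σ
    rw [lpnorm_ne_top N ε hpt]
    positivity
  · -- nq0
    intro σ
    rw [lpnorm_ne_top N ε hqt]
    positivity
  · -- npneg
    intro σ
    rw [lpnorm_ne_top N ε hpt, lpnorm_ne_top N ε hpt]
    congr 2
    exact Finset.sum_congr rfl fun ℓ _ => by rw [abs_neg]
  · -- hol
    intro σ τ
    rw [lpnorm_ne_top N ε hpt, lpnorm_ne_top N ε hqt]
    exact holC N hεpos hc σ τ
  · -- att
    intro σ hσ
    rw [lpnorm_ne_top N ε hpt] at hσ ⊢
    obtain ⟨τ, h1, h2⟩ := attC N hεpos hc σ hσ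
    exact ⟨τ, by rw [lpnorm_ne_top N ε hqt]; exact h1, h2⟩
  · -- tri
    intro τ c
    rw [lpnorm_ne_top N ε hqt, lpnorm_ne_top N ε hqt, lpnorm_ne_top N ε hqt]
    have h1 : ∀ ℓ : ℤ, |τ ℓ - c| = |τ ℓ + (fun _ : ℤ => -c) ℓ| := by
      intro ℓ; rw [sub_eq_add_neg]
    calc (ε * ∑ ℓ ∈ Finset.Icc (-(N:ℤ)+1) (N:ℤ), |τ ℓ - c| ^ q.toReal) ^ (1/q.toReal)
        = (ε * ∑ ℓ ∈ Finset.Icc (-(N:ℤ)+1) (N:ℤ),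
            |τ ℓ + (fun _ : ℤ => -c) ℓ| ^ q.toReal) ^ (1/q.toReal) := by
          congr 2
          try exact Finset.sum_congr rfl fun ℓ _ => by rw [h1 ℓ]
      _ ≤ (ε * ∑ ℓ ∈ Finset.Icc (-(N:ℤ)+1) (N:ℤ), |τ ℓ| ^ q.toReal) ^ (1/q.toReal)
          + (ε * ∑ ℓ ∈ Finset.Icc (-(N:ℤ)+1) (N:ℤ),
              |(fun _ : ℤ => -c) ℓ| ^ q.toReal) ^ (1/q.toReal) :=
            minkow N hεpos hc.symm.lt.le τ (fun _ => -c)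
      _ = (ε * ∑ ℓ ∈ Finset.Icc (-(N:ℤ)+1) (N:ℤ), |τ ℓ| ^ q.toReal) ^ (1/q.toReal)
          + |c| * (ε * ∑ ℓ ∈ Finset.Icc (-(N:ℤ)+1) (N:ℤ),
              |(fun _ : ℤ => (1:ℝ)) ℓ| ^ q.toReal) ^ (1/q.toReal) := by
            rw [normF_const N hεpos hc.symm.pos (-c), abs_neg]
  · -- hom
    intro τ A hA hτ
    rw [lpnorm_ne_top N ε hqt] at hτ ⊢
    rw [normF_hom N hεpos hc.symm.pos hA τ, hτ, div_self hA.ne']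
  · -- congrq
    intro τ τ' h
    rw [lpnorm_ne_top N ε hqt, lpnorm_ne_top N ε hqt]
    congr 2
    exact Finset.sum_congr rfl fun ℓ hℓ => by rw [h ℓ hℓ]
  · -- one2
    rw [lpnorm_ne_top N ε hpt, lpnorm_ne_top N ε hqt]
    have h1 := normF_one N hN hε (r := p.toReal)
    have h2 := normF_one N hN hε (r := q.toReal)
    rw [h1, h2, ← Real.rpow_add two_pos, one_div, one_div, hc.inv_add_inv_eq_one,
      Real.rpow_one]

/-- dual characterization of the U^{1,p} norm:
sup_{v ∈ U, ‖v'‖_{ℓ^q_ε}=1} ⟨u',v'⟩ ≤ ‖u'‖_{ℓ^p_ε} ≤ 2 sup_{...} ⟨u',v'⟩. -/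
theorem dual_characterization_U1p
    (N : ℕ) (hN : 2 ≤ N) (ε : ℝ) (hε : ε = 1 / N)
    (p q : ℝ≥0∞) (hp : 1 ≤ p) (hq : 1 ≤ q) (hpq : 1 / p + 1 / q = 1)
    (u : ℤ → ℝ) (hu : ∀ j : ℤ, (N : ℤ) ≤ |j| → u j = 0)
    (S : ℝ)
    (hS : S = sSup {s : ℝ | ∃ v : ℤ → ℝ,
      (∀ j : ℤ, (N : ℤ) ≤ |j| → v j = 0) ∧
      lpnorm N ε q (fun ℓ => (v ℓ - v (ℓ - 1)) / ε) = 1 ∧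
      s = ε * ∑ ℓ ∈ Finset.Icc (-(N : ℤ) + 1) (N : ℤ),
        ((u ℓ - u (ℓ - 1)) / ε) * ((v ℓ - v (ℓ - 1)) / ε)}) :
    S ≤ lpnorm N ε p (fun ℓ => (u ℓ - u (ℓ - 1)) / ε) ∧
    lpnorm N ε p (fun ℓ => (u ℓ - u (ℓ - 1)) / ε) ≤ 2 * S := by
  by_cases hpt : p = ⊤
  · have hq1 : q = 1 := by
      rw [hpt] at hpq
      simp only [one_div, ENNReal.inv_top, zero_add, ENNReal.inv_eq_one] at hpq
      exact hpq
    subst hpt hq1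
    exact caseA N hN ε hε u hu S hS
  · by_cases hqt : q = ⊤
    · have hp1 : p = 1 := by
        rw [hqt] at hpq
        simp only [one_div, ENNReal.inv_top, add_zero, ENNReal.inv_eq_one] at hpq
        exact hpq
      subst hqt hp1
      exact caseB N hN ε hε u hu S hS
    · have hp0 : p ≠ 0 := by
        intro h; rw [h] at hp; exact (by simp at hp)
      have hq0 : q ≠ 0 := by
        intro h; rw [h] at hq; exact (by simp at hq)
      have hpr1 : (1:ℝ) ≤ p.toReal := by
        have := ENNReal.toReal_mono hpt hp
        simpa using this
      have hqr1 : (1:ℝ) ≤ q.toReal := by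
        have := ENNReal.toReal_mono hqt hq
        simpa using this
      have hsum : p.toReal⁻¹ + q.toReal⁻¹ = 1 := by
        rw [one_div, one_div] at hpq
        have h1 : ((p⁻¹ + q⁻¹ : ℝ≥0∞)).toReal = (1 : ℝ≥0∞).toReal := by rw [hpq]
        rw [ENNReal.toReal_add (ENNReal.inv_ne_top.2 hp0) (ENNReal.inv_ne_top.2 hq0),
          ENNReal.toReal_inv, ENNReal.toReal_inv, ENNReal.toReal_one] at h1
        exact h1
      have hc : Real.HolderConjugate p.toReal q.toReal := by
        rw [Real.holderConjugate_iff]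
        constructor
        · -- 1 < p.toReal
          have hqr0 : 0 < q.toReal := lt_of_lt_of_le one_pos hqr1
          have h2 : q.toReal⁻¹ ≤ 1 := by
            rw [inv_le_one_iff₀]; right; exact hqr1
          have h3 : 0 < q.toReal⁻¹ := inv_pos.2 hqr0
          have h4 : p.toReal⁻¹ < 1 := by linarith
          have hpr0 : 0 < p.toReal := lt_of_lt_of_le one_pos hpr1
          have h5 := mul_inv_cancel₀ hpr0.ne'
          nlinarith
        · exact hsum
      exact caseC N hN ε hε p q hpt hqt hc u hu S hS
end
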